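/- arXiv:1506.07046 — 3 statements merged into one kernel-verified Lean document; each statement's English description precedes it below -/
import Mathlib

section
/- Let q be a positive integer divisible by 4. Consider the assignment problem with couples with two hospitals H = {h, h'}; single interns s₁,…,s_{q/2+1} whose M-rows equal 1 at h and 0 at h'; single interns s'₁,…,s'_{q/2+1} whose M-rows equal 0 at h and 1 at h'; one couple c* whose members' M-rows equal 1/2 at h and 1/2 at h'; couples c₁,…,c_{q/4−1} whose members' M-rows equal 1 at h and 0 at h'; and couples c'₁,…,c'_{q/4−1} whose members' M-rows equal 0 at h and 1 at h'. Then both hospitals have capacity q, the problem belongs to the domain 𝒫^{S≥C}, and every convex combination {(λ^k, M^k)}_{k=1}^K of deterministic assignment matrices has approximation error at least 2/(q + 2). -/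
open Finset

/-- `(S, C, H, M)` (with `I`, `H` types of interns and hospitals) is an assignment problem
with couples: `S` is the set of single interns, `C` the set of couples (ordered pairs of
members), every intern is a single or a member of a couple, members of couples are distinct
from each other, from the singles, and from members of other couples, `M ∈ [0,1]^{I×H}`,
each row of `M` sums to `1`, and both members of a couple have identical rows. -/
def IsCouplesProblem {I H : Type*} [Fintype I] [Fintype H]
    (S : Finset I) (C : Finset (I × I)) (M : I → H → ℝ) : Prop :=
  (∀ i : I, i ∈ S ∨ ∃ c ∈ C, i = c.1 ∨ i = c.2) ∧
  (∀ c ∈ C, c.1 ∉ S ∧ c.2 ∉ S ∧ c.1 ≠ c.2) ∧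
  (∀ c ∈ C, ∀ c' ∈ C, c ≠ c' →
    c.1 ≠ c'.1 ∧ c.1 ≠ c'.2 ∧ c.2 ≠ c'.1 ∧ c.2 ≠ c'.2) ∧
  (∀ (i : I) (h : H), 0 ≤ M i h ∧ M i h ≤ 1) ∧
  (∀ i : I, ∑ h : H, M i h = 1) ∧
  (∀ c ∈ C, ∀ h : H, M c.1 h = M c.2 h)

/-- `M'` is a deterministic assignment matrix with respect to the problem with couples `C`
and target matrix `M`: its entries are in `{0,1}`, rows sum to `1`, both members of each
couple have identical rows, and each column sum equals the capacity `q_h = ∑ i, M i h`. -/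
def IsDeterministicAssignment {I H : Type*} [Fintype I] [Fintype H]
    (C : Finset (I × I)) (M M' : I → H → ℝ) : Prop :=
  (∀ (i : I) (h : H), M' i h = 0 ∨ M' i h = 1) ∧
  (∀ i : I, ∑ h : H, M' i h = 1) ∧
  (∀ c ∈ C, ∀ h : H, M' c.1 h = M' c.2 h) ∧
  (∀ h : H, ∑ i : I, M' i h = ∑ i : I, M i h)


/-- Interns in the lower-bound example: singles `s₁, …, s_{q/2+1}` and
`s'₁, …, s'_{q/2+1}`, the couple `c*` (two members indexed by `Bool`), and couples
`c₁, …, c_{q/4−1}` and `c'₁, …, c'_{q/4−1}` (each with two members indexed by `Bool`). -/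
inductive ExIntern (q : ℕ) where
  | s (j : Fin (q / 2 + 1))
  | s' (j : Fin (q / 2 + 1))
  | cstar (b : Bool)
  | c (j : Fin (q / 4 - 1)) (b : Bool)
  | c' (j : Fin (q / 4 - 1)) (b : Bool)
  deriving DecidableEq, Fintype

/-- The target matrix of the example: hospitals are `Bool`, with `true` being `h` and
`false` being `h'`.  The `s`-singles and `c`-couples demand `h` with probability 1, the
`s'`-singles and `c'`-couples demand `h'` with probability 1, and the couple `c*` demands
each hospital with probability `1/2`. -/
noncomputable def exM (q : ℕ) : ExIntern q → Bool → ℝ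
  | .s _, b => if b then 1 else 0
  | .s' _, b => if b then 0 else 1
  | .cstar _, _ => 1 / 2
  | .c _ _, b => if b then 1 else 0
  | .c' _ _, b => if b then 0 else 1

/-- The set of single interns of the example. -/
def exS (q : ℕ) : Finset (ExIntern q) :=
  (Finset.univ.image ExIntern.s) ∪ (Finset.univ.image ExIntern.s')

/-- The set of couples of the example. -/
def exC (q : ℕ) : Finset (ExIntern q × ExIntern q) :=
  {(ExIntern.cstar false, ExIntern.cstar true)} ∪
    (Finset.univ.image fun j => (ExIntern.c j false, ExIntern.c j true)) ∪
    (Finset.univ.image fun j => (ExIntern.c' j false, ExIntern.c' j true))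

namespace LBAux

variable {q : ℕ}

def exEquiv (q : ℕ) :
    (Fin (q/2+1) ⊕ Fin (q/2+1) ⊕ Bool ⊕ (Fin (q/4-1) × Bool) ⊕ (Fin (q/4-1) × Bool)) ≃
      ExIntern q where
  toFun x := match x with
    | .inl j => .s j
    | .inr (.inl j) => .s' j
    | .inr (.inr (.inl b)) => .cstar b
    | .inr (.inr (.inr (.inl (j, b)))) => .c j b
    | .inr (.inr (.inr (.inr (j, b)))) => .c' j b
  invFun i := match i with
    | .s j => .inl j
    | .s' j => .inr (.inl j)
    | .cstar b => .inr (.inr (.inl b))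
    | .c j b => .inr (.inr (.inr (.inl (j, b))))
    | .c' j b => .inr (.inr (.inr (.inr (j, b))))
  left_inv x := by rcases x with j | j | b | ⟨j, b⟩ | ⟨j, b⟩ <;> rfl
  right_inv i := by cases i <;> rfl

lemma sum_exIntern (f : ExIntern q → ℝ) :
    ∑ i : ExIntern q, f i =
      (∑ j, f (.s j)) + (∑ j, f (.s' j)) + (f (.cstar true) + f (.cstar false)) +
        (∑ j, (f (.c j true) + f (.c j false))) +
        (∑ j, (f (.c' j true) + f (.c' j false))) := by
  rw [← Fintype.sum_equiv (exEquiv q) (fun x => f (exEquiv q x)) f (fun x => rfl)]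
  simp [Fintype.sum_sum_type, Fintype.sum_prod_type, exEquiv, Fintype.sum_bool]
  ring

end LBAux

lemma exists_nat_sum {ι : Type*} (s : Finset ι) (f : ι → ℝ)
    (h : ∀ x ∈ s, f x = 0 ∨ f x = 1) : ∃ n : ℕ, ∑ x ∈ s, f x = n := by
  classical
  induction s using Finset.induction_on with
  | empty => exact ⟨0, by simp⟩
  | @insert a t ha ih =>
    obtain ⟨n, hn⟩ := ih (fun x hxt => h x (Finset.mem_insert_of_mem hxt))
    rcases h a (Finset.mem_insert_self a t) with h0 | h1
    · exact ⟨n, by rw [Finset.sum_insert ha, h0, hn]; simp⟩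
    · exact ⟨n + 1, by rw [Finset.sum_insert ha, h1, hn]; push_cast; ring⟩

lemma lb_cap (m : ℕ) (hm : 1 ≤ m) (h : Bool) :
    ∑ i : ExIntern (4*m), exM (4*m) i h = ((4*m : ℕ) : ℝ) := by
  have c2 : ((4*m/2 : ℕ) : ℝ) = 2*m := by rw [(by omega : 4*m/2 = 2*m)]; push_cast; ring
  have c4 : ((m-1 : ℕ) : ℝ) = (m:ℝ)-1 := by push_cast [hm]; ring
  rw [LBAux.sum_exIntern]
  cases h <;> simp [exM, Finset.card_univ] <;> rw [c2, c4] <;> push_cast <;> ring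

lemma lb_couples (q : ℕ) : IsCouplesProblem (exS q) (exC q) (exM q) := by
  refine ⟨?_, ?_, ?_, ?_, ?_, ?_⟩
  · intro i
    cases i with
    | s j => exact Or.inl (by simp [exS])
    | s' j => exact Or.inl (by simp [exS])
    | cstar b =>
      refine Or.inr ⟨(.cstar false, .cstar true), by simp [exC], ?_⟩
      cases b <;> simp
    | c j b =>
      refine Or.inr ⟨(.c j false, .c j true), by simp [exC], ?_⟩
      cases b <;> simp
    | c' j b =>
      refine Or.inr ⟨(.c' j false, .c' j true), by simp [exC], ?_⟩
      cases b <;> simp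
  · intro c hc
    simp only [exC, Finset.mem_union, Finset.mem_singleton, Finset.mem_image,
      Finset.mem_univ, true_and] at hc
    rcases hc with (rfl | ⟨j, rfl⟩) | ⟨j, rfl⟩ <;> simp [exS]
  · intro c hc c' hc' hne
    simp only [exC, Finset.mem_union, Finset.mem_singleton, Finset.mem_image,
      Finset.mem_univ, true_and] at hc hc'
    rcases hc with (rfl | ⟨j, rfl⟩) | ⟨j, rfl⟩ <;>
      rcases hc' with (rfl | ⟨j', rfl⟩) | ⟨j', rfl⟩ <;>
      simp_all
  · intro i h; cases i <;> cases h <;> norm_num [exM]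
  · intro i; cases i <;> simp [exM, Fintype.sum_bool]
  · intro c hc
    simp only [exC, Finset.mem_union, Finset.mem_singleton, Finset.mem_image,
      Finset.mem_univ, true_and] at hc
    rcases hc with (rfl | ⟨j, rfl⟩) | ⟨j, rfl⟩ <;> intro h <;> rfl

lemma lb_domain (m : ℕ) (hm : 1 ≤ m) (h : Bool) :
    2 * ∑ c ∈ exC (4*m), exM (4*m) c.1 h ≤ ∑ s ∈ exS (4*m), exM (4*m) s h := by
  have c2 : ((4*m/2 : ℕ) : ℝ) = 2*m := by rw [(by omega : 4*m/2 = 2*m)]; push_cast; ring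
  have hS : ∑ s ∈ exS (4*m), exM (4*m) s h =
      (∑ j : Fin (4*m/2+1), exM (4*m) (.s j) h) +
      (∑ j : Fin (4*m/2+1), exM (4*m) (.s' j) h) := by
    rw [exS, Finset.sum_union (by
      simp only [Finset.disjoint_left, Finset.mem_image, Finset.mem_univ, true_and]
      rintro a ⟨j, rfl⟩ ⟨j', h'⟩
      exact absurd h' (by simp))]
    rw [Finset.sum_image (by intro a _ b _ hab; simpa using hab),
      Finset.sum_image (by intro a _ b _ hab; simpa using hab)]
  have hC : ∑ c ∈ exC (4*m), exM (4*m) c.1 h =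
      exM (4*m) (.cstar false) h +
      (∑ j : Fin (4*m/4-1), exM (4*m) (.c j false) h) +
      (∑ j : Fin (4*m/4-1), exM (4*m) (.c' j false) h) := by
    rw [exC, Finset.sum_union (by
      simp only [Finset.disjoint_left, Finset.mem_union, Finset.mem_singleton,
        Finset.mem_image, Finset.mem_univ, true_and]
      rintro a (rfl | ⟨j, rfl⟩) ⟨j', h'⟩ <;> exact absurd h' (by simp)),
      Finset.sum_union (by
      simp only [Finset.disjoint_left, Finset.mem_singleton, Finset.mem_image,
        Finset.mem_univ, true_and]
      rintro a rfl ⟨j', h'⟩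
      exact absurd h' (by simp))]
    rw [Finset.sum_singleton,
      Finset.sum_image (by intro a _ b _ hab; simpa [Prod.ext_iff] using hab),
      Finset.sum_image (by intro a _ b _ hab; simpa [Prod.ext_iff] using hab)]
  rw [hS, hC]
  cases h <;> simp [exM, Finset.card_univ] <;> rw [Nat.cast_sub hm, c2] <;> push_cast <;> linarith
section Main
variable (m : ℕ)

lemma lb_key (hm : 1 ≤ m) (K : ℕ) (lam : Fin K → ℝ) (Ms : Fin K → ExIntern (4*m) → Bool → ℝ)
    (hMs : ∀ k, IsDeterministicAssignment (exC (4*m)) (exM (4*m)) (Ms k))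
    (hcap : ∑ i : ExIntern (4*m), exM (4*m) i true = ((4*m : ℕ) : ℝ)) (k : Fin K) :
    1 ≤ (∑ j, (1 - Ms k (.s j) true)) + ∑ j, Ms k (.s' j) true := by
  obtain ⟨h01, hrow, hcpl, hcol⟩ := hMs k
  have hc := hcol true
  rw [hcap, LBAux.sum_exIntern (fun i => Ms k i true)] at hc
  have hstar : Ms k (.cstar true) true = Ms k (.cstar false) true :=
    (hcpl (.cstar false, .cstar true) (by simp [exC]) true).symm
  have hcj : ∀ j, Ms k (.c j true) true = Ms k (.c j false) true := fun j =>
    (hcpl (.c j false, .c j true) (by simp [exC]) true).symm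
  have hc'j : ∀ j, Ms k (.c' j true) true = Ms k (.c' j false) true := fun j =>
    (hcpl (.c' j false, .c' j true) (by simp [exC]) true).symm
  simp only [hstar, hcj, hc'j] at hc
  rw [Finset.sum_add_distrib, Finset.sum_add_distrib] at hc
  obtain ⟨nB, hnB⟩ := exists_nat_sum Finset.univ (fun j => Ms k (.s' j) true)
    (fun j _ => h01 (.s' j) true)
  obtain ⟨nG, hnG⟩ := exists_nat_sum Finset.univ (fun j => Ms k (.c j false) true)
    (fun j _ => h01 (.c j false) true)
  obtain ⟨nG', hnG'⟩ := exists_nat_sum Finset.univ (fun j => Ms k (.c' j false) true)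
    (fun j _ => h01 (.c' j false) true)
  obtain ⟨nX, hnX⟩ : ∃ n : ℕ, Ms k (.cstar false) true = n := by
    rcases h01 (.cstar false) true with h | h
    exacts [⟨0, by simp [h]⟩, ⟨1, by simp [h]⟩]
  have hA : ∑ j, Ms k (.s j) true ≤ ((4*m/2+1 : ℕ) : ℝ) := by
    calc ∑ j, Ms k (.s j) true ≤ ∑ _j : Fin (4*m/2+1), (1:ℝ) :=
          Finset.sum_le_sum fun j _ => by rcases h01 (.s j) true with h | h <;> simp [h]
      _ = ((4*m/2+1 : ℕ) : ℝ) := by simp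
  rw [Finset.sum_sub_distrib]
  have c2 : ((4*m/2+1 : ℕ) : ℝ) = 2*m+1 := by
    rw [(by omega : 4*m/2 = 2*m)]; push_cast; ring
  have c4m : ((4*m : ℕ) : ℝ) = 4*(m:ℝ) := by push_cast; ring
  rw [hnB, hnG, hnG', hnX, c4m] at hc
  have hge : (0:ℝ) ≤ ((4*m/2+1 : ℕ) : ℝ) - ∑ j, Ms k (.s j) true + nB := by
    have := Nat.cast_nonneg (α := ℝ) nB
    linarith
  have hnat : 2*m ≤ 2*(nB + nX + nG + nG') + 1 := by
    have h1 : (2*(m:ℝ)) ≤ 2*((nB:ℝ) + nX + nG + nG') + 1 := by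
      rw [c2] at hge hA
      linarith
    exact_mod_cast h1
  have hmn : (m:ℝ) ≤ (nB:ℝ) + nX + nG + nG' := by
    have : m ≤ nB + nX + nG + nG' := by omega
    exact_mod_cast this
  have hsimp : ∑ j : Fin (4*m/2+1), (1:ℝ) = ((4*m/2+1 : ℕ) : ℝ) := by simp
  rw [hsimp, hnB, c2]
  rw [c2] at hA
  linarith

end Main
section Main2

lemma lb_final (m : ℕ) (hm : 1 ≤ m) (K : ℕ) (lam : Fin K → ℝ)
    (Ms : Fin K → ExIntern (4*m) → Bool → ℝ)
    (hlam0 : ∀ k, 0 ≤ lam k) (hlam1 : ∑ k, lam k = 1)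
    (hMs : ∀ k, IsDeterministicAssignment (exC (4*m)) (exM (4*m)) (Ms k))
    (hcap : ∑ i : ExIntern (4*m), exM (4*m) i true = ((4*m : ℕ) : ℝ)) :
    ∃ i : ExIntern (4*m),
      2 / (((4*m : ℕ)) + 2 : ℝ) ≤ ∑ h : Bool, |exM (4*m) i h - ∑ k, lam k * Ms k i h| := by
  have c4m : ((4*m : ℕ) : ℝ) = 4*(m:ℝ) := by push_cast; ring
  have hq2 : (0:ℝ) < ((4*m : ℕ) : ℝ) + 2 := by positivity
  set Ds : Fin (4*m/2+1) → ℝ := fun j => ∑ k, lam k * (1 - Ms k (.s j) true) with hDs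
  set Dp : Fin (4*m/2+1) → ℝ := fun j => ∑ k, lam k * Ms k (.s' j) true with hDp
  have h01 : ∀ k i h, Ms k i h = 0 ∨ Ms k i h = 1 := fun k => (hMs k).1
  have hrow : ∀ k i, Ms k i false = 1 - Ms k i true := by
    intro k i
    have := (hMs k).2.1 i
    rw [Fintype.sum_bool] at this
    linarith
  have hDsnn : ∀ j, 0 ≤ Ds j := fun j =>
    Finset.sum_nonneg fun k _ => mul_nonneg (hlam0 k)
      (by rcases h01 k (.s j) true with h | h <;> simp [h])
  have hDpnn : ∀ j, 0 ≤ Dp j := fun j =>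
    Finset.sum_nonneg fun k _ => mul_nonneg (hlam0 k)
      (by rcases h01 k (.s' j) true with h | h <;> simp [h])
  -- total shortfall at least one
  have hsum : 1 ≤ (∑ j, Ds j) + ∑ j, Dp j := by
    have e1 : ∑ j, Ds j = ∑ k, lam k * ∑ j, (1 - Ms k (.s j) true) := by
      rw [hDs, Finset.sum_comm]
      exact Finset.sum_congr rfl fun k _ => (Finset.mul_sum _ _ _).symm
    have e2 : ∑ j, Dp j = ∑ k, lam k * ∑ j, Ms k (.s' j) true := by
      rw [hDp, Finset.sum_comm]
      exact Finset.sum_congr rfl fun k _ => (Finset.mul_sum _ _ _).symm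
    rw [e1, e2, ← Finset.sum_add_distrib]
    calc (1:ℝ) = ∑ k, lam k := hlam1.symm
      _ ≤ ∑ k, (lam k * ∑ j, (1 - Ms k (.s j) true) + lam k * ∑ j, Ms k (.s' j) true) := by
          refine Finset.sum_le_sum fun k _ => ?_
          rw [← mul_add]
          exact le_mul_of_one_le_right (hlam0 k) (lb_key m hm K lam Ms hMs hcap k)
  -- error of each single equals twice its shortfall
  have herrS : ∀ j, ∑ h : Bool, |exM (4*m) (.s j) h - ∑ k, lam k * Ms k (.s j) h| = 2 * Ds j := by
    intro j
    have hP : ∑ k, lam k * Ms k (.s j) false = Ds j := by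
      rw [hDs]
      exact Finset.sum_congr rfl fun k _ => by rw [hrow k (.s j)]
    have hQ : 1 - ∑ k, lam k * Ms k (.s j) true = Ds j := by
      rw [hDs]
      simp only [mul_one_sub]
      rw [Finset.sum_sub_distrib, hlam1]
    rw [Fintype.sum_bool]
    have et : exM (4*m) (ExIntern.s j) true = 1 := by simp [exM]
    have ef : exM (4*m) (ExIntern.s j) false = 0 := by simp [exM]
    rw [et, ef, hP]
    rw [show (1:ℝ) - ∑ k, lam k * Ms k (.s j) true = Ds j from hQ]
    rw [abs_of_nonneg (hDsnn j), show (0:ℝ) - Ds j = -(Ds j) by ring, abs_neg,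
      abs_of_nonneg (hDsnn j)]
    ring
  have herrS' : ∀ j, ∑ h : Bool, |exM (4*m) (.s' j) h - ∑ k, lam k * Ms k (.s' j) h| = 2 * Dp j := by
    intro j
    have hP : ∑ k, lam k * Ms k (.s' j) true = Dp j := rfl
    have hQ : 1 - ∑ k, lam k * Ms k (.s' j) false = Dp j := by
      rw [hDp]
      have : ∑ k, lam k * Ms k (.s' j) false = ∑ k, (lam k - lam k * Ms k (.s' j) true) :=
        Finset.sum_congr rfl fun k _ => by rw [hrow k (.s' j)]; ring
      rw [this, Finset.sum_sub_distrib, hlam1]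
      ring
    rw [Fintype.sum_bool]
    have et : exM (4*m) (ExIntern.s' j) true = 0 := by simp [exM]
    have ef : exM (4*m) (ExIntern.s' j) false = 1 := by simp [exM]
    rw [et, ef, hP]
    rw [show (1:ℝ) - ∑ k, lam k * Ms k (.s' j) false = Dp j from hQ]
    rw [show (0:ℝ) - Dp j = -(Dp j) by ring, abs_neg, abs_of_nonneg (hDpnn j)]
    ring
  by_contra hcon
  push_neg at hcon
  have hDsLt : ∀ j, Ds j < 1 / (((4*m : ℕ)) + 2 : ℝ) := by
    intro j
    have := hcon (.s j)
    rw [herrS j] at this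
    rw [div_eq_mul_inv] at this ⊢
    linarith [this]
  have hDpLt : ∀ j, Dp j < 1 / (((4*m : ℕ)) + 2 : ℝ) := by
    intro j
    have := hcon (.s' j)
    rw [herrS' j] at this
    rw [div_eq_mul_inv] at this ⊢
    linarith [this]
  have hcard : ((4*m/2+1 : ℕ) : ℝ) = 2*m+1 := by
    rw [(by omega : 4*m/2 = 2*m)]; push_cast; ring
  have hne : (Finset.univ : Finset (Fin (4*m/2+1))).Nonempty := Finset.univ_nonempty
  have hsum1 : ∑ j, Ds j < (2*(m:ℝ)+1) * (1 / (((4*m : ℕ)) + 2 : ℝ)) := by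
    calc ∑ j, Ds j < ∑ _j : Fin (4*m/2+1), 1 / (((4*m : ℕ)) + 2 : ℝ) :=
          Finset.sum_lt_sum_of_nonempty hne fun j _ => hDsLt j
      _ = (2*(m:ℝ)+1) * (1 / (((4*m : ℕ)) + 2 : ℝ)) := by
          rw [Finset.sum_const, Finset.card_univ, Fintype.card_fin, nsmul_eq_mul, hcard]
  have hsum2 : ∑ j, Dp j < (2*(m:ℝ)+1) * (1 / (((4*m : ℕ)) + 2 : ℝ)) := by
    calc ∑ j, Dp j < ∑ _j : Fin (4*m/2+1), 1 / (((4*m : ℕ)) + 2 : ℝ) :=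
          Finset.sum_lt_sum_of_nonempty hne fun j _ => hDpLt j
      _ = (2*(m:ℝ)+1) * (1 / (((4*m : ℕ)) + 2 : ℝ)) := by
          rw [Finset.sum_const, Finset.card_univ, Fintype.card_fin, nsmul_eq_mul, hcard]
  have hone : (2*(m:ℝ)+1) * (1 / (((4*m : ℕ)) + 2 : ℝ)) * 2 = 1 := by
    rw [c4m]
    field_simp
    ring
  linarith

end Main2

/-- in the example above (for `q` a positive multiple of 4), both hospitals
have capacity `q`, the problem is a valid assignment problem with couples lying in the
domain `𝒫^{S ≥ C}`, and every convex combination of deterministic assignment matrices has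
approximation error at least `2 / (q + 2)`. -/
theorem lower_bound_example (q : ℕ) (hq : 0 < q) (h4 : 4 ∣ q) :
    (∀ h : Bool, ∑ i : ExIntern q, exM q i h = q) ∧
    IsCouplesProblem (exS q) (exC q) (exM q) ∧
    (∀ h : Bool, 2 * ∑ c ∈ exC q, exM q c.1 h ≤ ∑ s ∈ exS q, exM q s h) ∧
    ∀ (K : ℕ) (lam : Fin K → ℝ) (Ms : Fin K → ExIntern q → Bool → ℝ),
      (∀ k, 0 ≤ lam k) → ∑ k, lam k = 1 →
      (∀ k, IsDeterministicAssignment (exC q) (exM q) (Ms k)) →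
      ∃ i : ExIntern q,
        2 / ((q : ℝ) + 2) ≤ ∑ h : Bool, |exM q i h - ∑ k, lam k * Ms k i h| := by
  obtain ⟨m, rfl⟩ := h4
  have hm : 1 ≤ m := by omega
  refine ⟨lb_cap m hm, lb_couples _, lb_domain m hm, ?_⟩
  intro K lam Ms hlam0 hlam1 hMs
  exact lb_final m hm K lam Ms hlam0 hlam1 hMs (lb_cap m hm true)
end

section
/- Let q be a positive integer divisible by 4, and consider the assignment problem with couples with two hospitals H = {h, h'}; single interns s₁,…,s_{q/2+1} whose M-rows equal 1 at h and 0 at h'; single interns s'₁,…,s'_{q/2+1} whose M-rows equal 0 at h and 1 at h'; one couple c* whose members' M-rows equal 1/2 at h and 1/2 at h'; couples c₁,…,c_{q/4−1} whose members' M-rows equal 1 at h and 0 at h'; and couples c'₁,…,c'_{q/4−1} whose members' M-rows equal 0 at h and 1 at h' (so both hospitals have capacity q and there are q/2 − 1 couples in total). Then in every deterministic assignment matrix M' for this problem, at least one of the two hospitals is assigned at least q/4 couples; consequently, for that hospital h* there exists at least one single intern i with M_{i,h*} = 1 but M'_{i,h*} = 0. -/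
open Finset

section Aux

variable {q : ℕ}

/-- Membership in `exC`. -/
lemma mem_exC_iff {p : ExIntern q × ExIntern q} :
    p ∈ exC q ↔ p = (ExIntern.cstar false, ExIntern.cstar true) ∨
      (∃ j, p = (ExIntern.c j false, ExIntern.c j true)) ∨
      (∃ j, p = (ExIntern.c' j false, ExIntern.c' j true)) := by
  simp only [exC, Finset.mem_union, Finset.mem_singleton, Finset.mem_image,
    Finset.mem_univ, true_and]
  constructor
  · rintro ((h | ⟨j, h⟩) | ⟨j, h⟩)
    · exact Or.inl h
    · exact Or.inr (Or.inl ⟨j, h.symm⟩)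
    · exact Or.inr (Or.inr ⟨j, h.symm⟩)
  · rintro (h | ⟨j, h⟩ | ⟨j, h⟩)
    · exact Or.inl (Or.inl h)
    · exact Or.inl (Or.inr ⟨j, h.symm⟩)
    · exact Or.inr ⟨j, h.symm⟩

lemma card_exC : (exC q).card = 1 + (q / 4 - 1) + (q / 4 - 1) := by
  have hinj1 : Function.Injective
      (fun j : Fin (q / 4 - 1) => (ExIntern.c j false, ExIntern.c j true)) := by
    intro a b h
    simpa using h
  have hinj2 : Function.Injective
      (fun j : Fin (q / 4 - 1) => (ExIntern.c' j false, ExIntern.c' j true)) := by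
    intro a b h
    simpa using h
  have hd1 : Disjoint ({(ExIntern.cstar false, ExIntern.cstar true)} :
      Finset (ExIntern q × ExIntern q))
      (Finset.univ.image fun j => (ExIntern.c j false, ExIntern.c j true)) := by
    simp [Finset.disjoint_left]
  have hd2 : Disjoint (({(ExIntern.cstar false, ExIntern.cstar true)} :
      Finset (ExIntern q × ExIntern q)) ∪
      (Finset.univ.image fun j => (ExIntern.c j false, ExIntern.c j true)))
      (Finset.univ.image fun j => (ExIntern.c' j false, ExIntern.c' j true)) := by
    simp [Finset.disjoint_left, Finset.mem_union]
  rw [exC, Finset.card_union_of_disjoint hd2, Finset.card_union_of_disjoint hd1,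
    Finset.card_image_of_injective _ hinj1, Finset.card_image_of_injective _ hinj2]
  simp

/-- Whether an intern is one of the singles. -/
def isSingle : ExIntern q → Prop
  | .s _ => True
  | .s' _ => True
  | _ => False

lemma not_isSingle_of_mem_exC {p : ExIntern q × ExIntern q} (hp : p ∈ exC q) :
    ¬ isSingle p.1 ∧ ¬ isSingle p.2 := by
  rcases mem_exC_iff.mp hp with h | ⟨j, h⟩ | ⟨j, h⟩ <;> subst h <;>
    simp [isSingle]

lemma injOn_fst_exC : Set.InjOn (Prod.fst) (exC q : Set (ExIntern q × ExIntern q)) := by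
  intro a ha b hb hab
  rcases mem_exC_iff.mp ha with h | ⟨j, h⟩ | ⟨j, h⟩ <;>
    rcases mem_exC_iff.mp hb with h' | ⟨j', h'⟩ | ⟨j', h'⟩ <;>
      subst h <;> subst h' <;> simp_all

lemma injOn_snd_exC : Set.InjOn (Prod.snd) (exC q : Set (ExIntern q × ExIntern q)) := by
  intro a ha b hb hab
  rcases mem_exC_iff.mp ha with h | ⟨j, h⟩ | ⟨j, h⟩ <;>
    rcases mem_exC_iff.mp hb with h' | ⟨j', h'⟩ | ⟨j', h'⟩ <;>
      subst h <;> subst h' <;> simp_all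

/-- A flag distinguishing first and second members of couples. -/
def exFlag : ExIntern q → Bool
  | .cstar b => b
  | .c _ b => b
  | .c' _ b => b
  | _ => true

lemma flag_of_mem_exC {p : ExIntern q × ExIntern q} (hp : p ∈ exC q) :
    exFlag p.1 = false ∧ exFlag p.2 = true := by
  rcases mem_exC_iff.mp hp with h | ⟨j, h⟩ | ⟨j, h⟩ <;> subst h <;> simp [exFlag]

/-- The equivalence decomposing the intern type. -/
def exEquiv (q : ℕ) : ExIntern q ≃
    (Fin (q / 2 + 1) ⊕ Fin (q / 2 + 1) ⊕ Bool ⊕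
      (Fin (q / 4 - 1) × Bool) ⊕ (Fin (q / 4 - 1) × Bool)) where
  toFun
    | .s j => Sum.inl j
    | .s' j => Sum.inr (Sum.inl j)
    | .cstar b => Sum.inr (Sum.inr (Sum.inl b))
    | .c j b => Sum.inr (Sum.inr (Sum.inr (Sum.inl (j, b))))
    | .c' j b => Sum.inr (Sum.inr (Sum.inr (Sum.inr (j, b))))
  invFun
    | Sum.inl j => .s j
    | Sum.inr (Sum.inl j) => .s' j
    | Sum.inr (Sum.inr (Sum.inl b)) => .cstar b
    | Sum.inr (Sum.inr (Sum.inr (Sum.inl (j, b)))) => .c j b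
    | Sum.inr (Sum.inr (Sum.inr (Sum.inr (j, b)))) => .c' j b
  left_inv := by intro i; cases i <;> rfl
  right_inv := by rintro (j | j | b | ⟨j, b⟩ | ⟨j, b⟩) <;> rfl

lemma sum_exM_col (k : ℕ) (hk : 0 < k) (hq : q = 4 * k) (b : Bool) :
    ∑ i : ExIntern q, exM q i b = (q : ℝ) := by
  rw [← Equiv.sum_comp (exEquiv q).symm (fun i => exM q i b)]
  have h2 : q / 2 + 1 = 2 * k + 1 := by omega
  have h4 : q / 4 - 1 = k - 1 := by omega
  have h5 : k * 4 / 2 = 2 * k := by omega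
  have hcast : ((k - 1 : ℕ) : ℝ) = (k : ℝ) - 1 := by
    exact_mod_cast Nat.cast_sub hk
  cases b <;>
    simp [Fintype.sum_sum_type, Fintype.sum_prod_type, exEquiv, exM,
      Finset.sum_const, Fintype.sum_bool, h2, h4, h5, hcast, hq] <;>
    rw [show 4 * k / 2 = 2 * k from by omega] <;> push_cast <;> ring

end Aux

/-- in the example above (for `q` a positive multiple of 4), every
deterministic assignment matrix assigns at least `q/4` couples to one of the two hospitals
`h*`, and consequently some single intern `i` with `M_{i,h*} = 1` is not assigned to `h*`. -/
theorem lower_bound_example_deterministic (q : ℕ) (hq : 0 < q) (h4 : 4 ∣ q)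
    (M' : ExIntern q → Bool → ℝ)
    (hM' : IsDeterministicAssignment (exC q) (exM q) M') :
    ∃ hstar : Bool,
      q / 4 ≤ ((exC q).filter fun c => M' c.1 hstar = 1 ∧ M' c.2 hstar = 1).card ∧
      ∃ i ∈ exS q, exM q i hstar = 1 ∧ M' i hstar = 0 := by
  classical
  obtain ⟨k, hqk⟩ := h4
  have hk : 0 < k := by omega
  obtain ⟨hone, hrow, hcpl, hcol⟩ := hM'
  have hsum2 : ∀ i, M' i true + M' i false = 1 := by
    intro i
    have := hrow i
    rwa [Fintype.sum_bool] at this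
  have key : ∀ c ∈ exC q, ((M' c.1 false = 1 ∧ M' c.2 false = 1) ↔
      ¬ (M' c.1 true = 1 ∧ M' c.2 true = 1)) := by
    intro c hc
    have h1 := hcpl c hc true
    have h2 := hcpl c hc false
    have hs := hsum2 c.1
    rw [← h1, ← h2, and_self, and_self]
    rcases hone c.1 true with h | h <;> rcases hone c.1 false with h' | h' <;>
      rw [h, h'] at hs ⊢ <;> (norm_num at hs <;> norm_num)
  have hpart : ((exC q).filter fun c => M' c.1 true = 1 ∧ M' c.2 true = 1).card +
      ((exC q).filter fun c => M' c.1 false = 1 ∧ M' c.2 false = 1).card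
        = (exC q).card := by
    have hbase := Finset.card_filter_add_card_filter_not
      (s := exC q) (p := fun c => M' c.1 true = 1 ∧ M' c.2 true = 1)
    rw [← hbase]
    exact congrArg (_ + ·) (congrArg Finset.card (Finset.filter_congr key))
  have hC : (exC q).card = 2 * k - 1 := by
    rw [card_exC]
    omega
  have hstar_ex : ∃ b : Bool,
      k ≤ ((exC q).filter fun c => M' c.1 b = 1 ∧ M' c.2 b = 1).card := by
    by_contra h
    push_neg at h
    have h1 := h true
    have h2 := h false
    omega
  obtain ⟨hstar, hFcard⟩ := hstar_ex
  refine ⟨hstar, by rw [show q / 4 = k from by omega]; exact hFcard, ?_⟩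
  by_contra hno
  push_neg at hno
  set F : Finset (ExIntern q × ExIntern q) :=
    (exC q).filter fun c => M' c.1 hstar = 1 ∧ M' c.2 hstar = 1 with hF
  have hFsub : F ⊆ exC q := Finset.filter_subset _ _
  set T : Finset (ExIntern q) :=
    cond hstar (Finset.univ.image ExIntern.s) (Finset.univ.image ExIntern.s') with hT
  have hTmem : ∀ i ∈ T, i ∈ exS q ∧ exM q i hstar = 1 ∧ isSingle i := by
    intro i hi
    rw [hT] at hi
    cases hstar <;>
      simp only [Bool.cond_false, Bool.cond_true, Finset.mem_image, Finset.mem_univ,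
        true_and] at hi <;>
      obtain ⟨j, rfl⟩ := hi <;>
      simp [exS, exM, isSingle]
  have hTone : ∀ i ∈ T, M' i hstar = 1 := by
    intro i hi
    obtain ⟨h1, h2, -⟩ := hTmem i hi
    rcases hone i hstar with h | h
    · exact absurd h (hno i h1 h2)
    · exact h
  have hTcard : T.card = 2 * k + 1 := by
    have hs : Function.Injective (ExIntern.s (q := q)) := fun a b h => by simpa using h
    have hs' : Function.Injective (ExIntern.s' (q := q)) := fun a b h => by simpa using h
    have h2 : q / 2 + 1 = 2 * k + 1 := by omega
    rw [hT]
    cases hstar <;>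
      simp [Finset.card_image_of_injective _ hs, Finset.card_image_of_injective _ hs', h2]
  set U : Finset (ExIntern q) := F.image Prod.fst ∪ F.image Prod.snd with hU
  have hUone : ∀ i ∈ U, M' i hstar = 1 := by
    intro i hi
    rw [hU] at hi
    rcases Finset.mem_union.mp hi with h | h <;>
      obtain ⟨p, hp, rfl⟩ := Finset.mem_image.mp h
    · exact (Finset.mem_filter.mp hp).2.1
    · exact (Finset.mem_filter.mp hp).2.2
  have hUnotsingle : ∀ i ∈ U, ¬ isSingle i := by
    intro i hi
    rw [hU] at hi
    rcases Finset.mem_union.mp hi with h | h <;>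
      obtain ⟨p, hp, rfl⟩ := Finset.mem_image.mp h
    · exact (not_isSingle_of_mem_exC (hFsub hp)).1
    · exact (not_isSingle_of_mem_exC (hFsub hp)).2
  have hUcard : U.card = 2 * F.card := by
    have hd : Disjoint (F.image Prod.fst) (F.image Prod.snd) := by
      rw [Finset.disjoint_left]
      intro a ha hb
      obtain ⟨p, hp, rfl⟩ := Finset.mem_image.mp ha
      obtain ⟨p', hp', he⟩ := Finset.mem_image.mp hb
      have f1 := (flag_of_mem_exC (hFsub hp)).1
      have f2 := (flag_of_mem_exC (hFsub hp')).2
      rw [he, f1] at f2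
      exact Bool.noConfusion f2
    rw [hU, Finset.card_union_of_disjoint hd,
      Finset.card_image_of_injOn (injOn_fst_exC.mono (Finset.coe_subset.mpr hFsub)),
      Finset.card_image_of_injOn (injOn_snd_exC.mono (Finset.coe_subset.mpr hFsub))]
    omega
  have hTU : Disjoint T U := by
    rw [Finset.disjoint_left]
    intro a ha hb
    exact (hUnotsingle a hb) (hTmem a ha).2.2
  have hcolv : ∑ i : ExIntern q, M' i hstar = (q : ℝ) := by
    rw [hcol hstar, sum_exM_col k hk hqk]
  have hge : (((T ∪ U).card : ℕ) : ℝ) ≤ ∑ i : ExIntern q, M' i hstar := by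
    have h1 : ∑ i ∈ T ∪ U, M' i hstar = (((T ∪ U).card : ℕ) : ℝ) := by
      rw [Finset.sum_congr rfl (fun i hi => ?_), Finset.sum_const, nsmul_eq_mul, mul_one]
      rcases Finset.mem_union.mp hi with h | h
      · exact hTone i h
      · exact hUone i h
    rw [← h1]
    apply Finset.sum_le_sum_of_subset_of_nonneg (Finset.subset_univ _)
    intro i _ _
    rcases hone i hstar with h | h <;> rw [h] <;> norm_num
  have hcardTU : (T ∪ U).card = T.card + U.card := Finset.card_union_of_disjoint hTU
  rw [hcolv, hcardTU, hTcard, hUcard] at hge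
  have hfin : 2 * k + 1 + 2 * F.card ≤ q := by exact_mod_cast hge
  omega
end

section
/- Let (S, C, H, M) be an assignment problem with couples in which every hospital capacity q_h is a positive integer and every hospital's singles' demand D_h = Σ_{s∈S} M_{s,h} satisfies D_h ≥ 2. Then there exists a convex combination {(λ^k, M^k)}_{k=1}^K of deterministic assignment matrices whose approximation error is at most 1/(min_{h∈H} D_h). -/
open Finset

namespace CouplesAux

noncomputable section
open scoped Classical

/-- `x` is an integer real. -/
def IsIntR (x : ℝ) : Prop := ∃ z : ℤ, x = (z : ℝ)

lemma IsIntR.add {x y : ℝ} (hx : IsIntR x) (hy : IsIntR y) : IsIntR (x + y) := by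
  obtain ⟨a, rfl⟩ := hx; obtain ⟨b, rfl⟩ := hy; exact ⟨a + b, by push_cast; ring⟩

lemma IsIntR.sub {x y : ℝ} (hx : IsIntR x) (hy : IsIntR y) : IsIntR (x - y) := by
  obtain ⟨a, rfl⟩ := hx; obtain ⟨b, rfl⟩ := hy; exact ⟨a - b, by push_cast; ring⟩

lemma isIntR_zero : IsIntR 0 := ⟨0, by simp⟩
lemma isIntR_one : IsIntR 1 := ⟨1, by simp⟩

lemma isIntR_sum {ι : Type*} (s : Finset ι) (f : ι → ℝ) (h : ∀ i ∈ s, IsIntR (f i)) :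
    IsIntR (∑ i ∈ s, f i) :=
  Finset.sum_induction f IsIntR (fun _ _ ha hb => ha.add hb) isIntR_zero h

lemma isIntR_mem01 {x : ℝ} (h0 : 0 ≤ x) (h1 : x ≤ 1) (hi : IsIntR x) : x = 0 ∨ x = 1 := by
  obtain ⟨z, rfl⟩ := hi
  have hz0 : (0:ℤ) ≤ z := by exact_mod_cast h0
  have hz1 : z ≤ 1 := by exact_mod_cast h1
  interval_cases z <;> simp

/-- fractional: not 0 and not 1. -/
def Frac (x : ℝ) : Prop := ¬(x = 0 ∨ x = 1)

lemma isIntR_of_not_frac {x : ℝ} (h : ¬ Frac x) : IsIntR x := by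
  rcases not_not.mp h with h | h <;> subst h
  exacts [isIntR_zero, isIntR_one]

variable {A Hh : Type*} [Fintype A] [Fintype Hh]

/-- Feasible point of the (interval-constrained) transportation polytope. -/
def Feas (α β : Hh → ℤ) (X : A → Hh → ℝ) : Prop :=
  (∀ a h, 0 ≤ X a h) ∧ (∀ a, ∑ h, X a h = 1) ∧
  (∀ h, (α h : ℝ) ≤ ∑ a, X a h ∧ ∑ a, X a h ≤ (β h : ℝ))

def Integral (X : A → Hh → ℝ) : Prop := ∀ a h, X a h = 0 ∨ X a h = 1

def fracEnt (X : A → Hh → ℝ) : Finset (A × Hh) := univ.filter fun p => Frac (X p.1 p.2)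

def fracCol (X : A → Hh → ℝ) : Finset Hh := univ.filter fun h => ¬ IsIntR (∑ a, X a h)

def msr (X : A → Hh → ℝ) : ℕ := (fracEnt X).card + (fracCol X).card

lemma entry_le_one {α β : Hh → ℤ} {X : A → Hh → ℝ} (hX : Feas α β X) (a : A) (h : Hh) :
    X a h ≤ 1 := by
  have := Finset.single_le_sum (f := fun h' => X a h') (fun h' _ => hX.1 a h') (mem_univ h)
  rw [hX.2.1 a] at this
  exact this

lemma mem_fracEnt {X : A → Hh → ℝ} {p : A × Hh} : p ∈ fracEnt X ↔ Frac (X p.1 p.2) := by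
  simp [fracEnt]

lemma mem_fracCol {X : A → Hh → ℝ} {h : Hh} : h ∈ fracCol X ↔ ¬ IsIntR (∑ a, X a h) := by
  simp [fracCol]

lemma two_le_row_deg {α β : Hh → ℤ} {X : A → Hh → ℝ} (hX : Feas α β X) {a : A} {h0 : Hh}
    (hm : (a, h0) ∈ fracEnt X) :
    2 ≤ ((fracEnt X).filter fun p => p.1 = a).card := by
  by_contra hlt
  push_neg at hlt
  have hmf : (a, h0) ∈ (fracEnt X).filter fun p => p.1 = a :=
    mem_filter.mpr ⟨hm, rfl⟩
  have huniq : ∀ p ∈ (fracEnt X).filter (fun p => p.1 = a), p = (a, h0) := by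
    intro p hp
    exact Finset.card_le_one.mp (by omega) p hp _ hmf
  have hrest : IsIntR (∑ h ∈ univ.erase h0, X a h) := by
    refine isIntR_sum _ _ fun h hh => ?_
    refine isIntR_of_not_frac fun hfr => ?_
    have : (a, h) ∈ (fracEnt X).filter (fun p => p.1 = a) :=
      mem_filter.mpr ⟨mem_fracEnt.mpr hfr, rfl⟩
    have := huniq _ this
    simp only [Prod.mk.injEq] at this
    exact (mem_erase.mp hh).1 this.2
  have hsum : ∑ h ∈ univ.erase h0, X a h + X a h0 = 1 := by
    rw [Finset.sum_erase_add _ _ (mem_univ h0)]; exact hX.2.1 a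
  have : IsIntR (X a h0) := by
    have : X a h0 = 1 - ∑ h ∈ univ.erase h0, X a h := by linarith
    rw [this]; exact isIntR_one.sub hrest
  have hfr : Frac (X a h0) := mem_fracEnt.mp hm
  exact hfr (isIntR_mem01 (hX.1 a h0) (entry_le_one hX a h0) this)

lemma two_le_col_deg {α β : Hh → ℤ} {X : A → Hh → ℝ} (hX : Feas α β X) {a0 : A} {h : Hh}
    (hm : (a0, h) ∈ fracEnt X) (hi : IsIntR (∑ a, X a h)) :
    2 ≤ ((fracEnt X).filter fun p => p.2 = h).card := by
  by_contra hlt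
  push_neg at hlt
  have hmf : (a0, h) ∈ (fracEnt X).filter fun p => p.2 = h :=
    mem_filter.mpr ⟨hm, rfl⟩
  have huniq : ∀ p ∈ (fracEnt X).filter (fun p => p.2 = h), p = (a0, h) := by
    intro p hp
    exact Finset.card_le_one.mp (by omega) p hp _ hmf
  have hrest : IsIntR (∑ a ∈ univ.erase a0, X a h) := by
    refine isIntR_sum _ _ fun a ha => ?_
    refine isIntR_of_not_frac fun hfr => ?_
    have : (a, h) ∈ (fracEnt X).filter (fun p => p.2 = h) :=
      mem_filter.mpr ⟨mem_fracEnt.mpr hfr, rfl⟩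
    have := huniq _ this
    simp only [Prod.mk.injEq] at this
    exact (mem_erase.mp ha).1 this.1
  have hsum : ∑ a ∈ univ.erase a0, X a h + X a0 h = ∑ a, X a h := by
    rw [Finset.sum_erase_add _ _ (mem_univ a0)]
  have : IsIntR (X a0 h) := by
    have heq : X a0 h = (∑ a, X a h) - ∑ a ∈ univ.erase a0, X a h := by linarith
    rw [heq]; exact hi.sub hrest
  have hfr : Frac (X a0 h) := mem_fracEnt.mp hm
  exact hfr (isIntR_mem01 (hX.1 a0 h) (entry_le_one hX a0 h) this)


/-- Extension by zero of a vector indexed by a finset of entries. -/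
def extL (F : Finset (A × Hh)) : (↥F → ℝ) →ₗ[ℝ] (A × Hh → ℝ) where
  toFun v p := if hp : p ∈ F then v ⟨p, hp⟩ else 0
  map_add' v w := by funext p; by_cases hp : p ∈ F <;> simp [hp]
  map_smul' c v := by funext p; by_cases hp : p ∈ F <;> simp [hp]

/-- Row/column sum map. -/
def rcMap (F : Finset (A × Hh)) (R' : Finset A) (H' : Finset Hh) :
    (↥F → ℝ) →ₗ[ℝ] ((↥R' → ℝ) × (↥H' → ℝ)) where
  toFun v := (fun a => ∑ h : Hh, extL F v (a.1, h), fun h => ∑ a : A, extL F v (a, h.1))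
  map_add' v w := by
    refine Prod.ext ?_ ?_ <;> funext x <;>
      simp [map_add, Finset.sum_add_distrib]
  map_smul' c v := by
    refine Prod.ext ?_ ?_ <;> funext x <;>
      simp [map_smul, Finset.mul_sum]

lemma exists_kernel_vec (F : Finset (A × Hh)) (R' : Finset A) (H' : Finset Hh)
    (hcard : R'.card + H'.card < F.card) :
    ∃ d : A × Hh → ℝ, d ≠ 0 ∧ (∀ p, d p ≠ 0 → p ∈ F) ∧
      (∀ a ∈ R', ∑ h : Hh, d (a, h) = 0) ∧ (∀ h ∈ H', ∑ a : A, d (a, h) = 0) := by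
  have hni : ¬ Function.Injective (rcMap F R' H') := by
    intro hinj
    have hle := LinearMap.finrank_le_finrank_of_injective hinj
    rw [Module.finrank_fintype_fun_eq_card, Fintype.card_coe] at hle
    have h2 : Module.finrank ℝ ((↥R' → ℝ) × (↥H' → ℝ)) = R'.card + H'.card := by
      rw [Module.finrank_prod, Module.finrank_fintype_fun_eq_card,
        Module.finrank_fintype_fun_eq_card, Fintype.card_coe, Fintype.card_coe]
    omega
  rw [← LinearMap.ker_eq_bot] at hni
  obtain ⟨v, hvker, hv0⟩ := (Submodule.ne_bot_iff _).mp hni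
  have hmap : rcMap F R' H' v = 0 := LinearMap.mem_ker.mp hvker
  refine ⟨extL F v, ?_, ?_, ?_, ?_⟩
  · intro h0
    apply hv0
    funext q
    have := congrFun h0 (q : A × Hh)
    simpa [extL, q.2] using this
  · intro p hp
    by_contra hpF
    exact hp (by simp [extL, hpF])
  · intro a ha
    have := congrFun (congrArg Prod.fst hmap) ⟨a, ha⟩
    simpa [rcMap] using this
  · intro h hh
    have := congrFun (congrArg Prod.snd hmap) ⟨h, hh⟩
    simpa [rcMap] using this

lemma row_count {α β : Hh → ℤ} {X : A → Hh → ℝ} (hX : Feas α β X) :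
    2 * ((fracEnt X).image Prod.fst).card ≤ (fracEnt X).card := by
  rw [Finset.card_eq_sum_card_fiberwise
    (f := Prod.fst) (t := (fracEnt X).image Prod.fst) (fun x hx => mem_image_of_mem _ hx)]
  calc 2 * ((fracEnt X).image Prod.fst).card
      = ∑ _a ∈ (fracEnt X).image Prod.fst, 2 := by simp [mul_comm]
    _ ≤ _ := by
        refine Finset.sum_le_sum fun a ha => ?_
        obtain ⟨p, hp, hpa⟩ := Finset.mem_image.mp ha
        have : (a, p.2) ∈ fracEnt X := by
          have : p = (a, p.2) := by rw [← hpa]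
          rwa [this] at hp
        exact two_le_row_deg hX this

lemma col_count {α β : Hh → ℤ} {X : A → Hh → ℝ} (hX : Feas α β X) :
    2 * (((fracEnt X).image Prod.snd).filter fun h => IsIntR (∑ a, X a h)).card
      + (((fracEnt X).image Prod.snd).filter fun h => ¬ IsIntR (∑ a, X a h)).card
      ≤ (fracEnt X).card := by
  set Hc := (fracEnt X).image Prod.snd with hHc
  rw [Finset.card_eq_sum_card_fiberwise
    (f := Prod.snd) (t := Hc) (fun x hx => mem_image_of_mem _ hx)]
  rw [← Finset.sum_filter_add_sum_filter_not Hc (fun h => IsIntR (∑ a, X a h))]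
  have h1 : ∀ h ∈ Hc.filter (fun h => IsIntR (∑ a, X a h)),
      2 ≤ ((fracEnt X).filter fun p => p.2 = h).card := by
    intro h hh
    obtain ⟨hhc, hint⟩ := mem_filter.mp hh
    obtain ⟨p, hp, hph⟩ := Finset.mem_image.mp hhc
    have hm : (p.1, h) ∈ fracEnt X := by
      have : p = (p.1, h) := by rw [← hph]
      rwa [this] at hp
    exact two_le_col_deg hX hm hint
  have h2 : ∀ h ∈ Hc.filter (fun h => ¬ IsIntR (∑ a, X a h)),
      1 ≤ ((fracEnt X).filter fun p => p.2 = h).card := by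
    intro h hh
    obtain ⟨hhc, _⟩ := mem_filter.mp hh
    obtain ⟨p, hp, hph⟩ := Finset.mem_image.mp hhc
    refine Finset.card_pos.mpr ⟨p, mem_filter.mpr ⟨hp, hph⟩⟩
  calc 2 * (Hc.filter fun h => IsIntR (∑ a, X a h)).card
        + (Hc.filter fun h => ¬ IsIntR (∑ a, X a h)).card
      = (∑ _h ∈ Hc.filter (fun h => IsIntR (∑ a, X a h)), 2)
        + ∑ _h ∈ Hc.filter (fun h => ¬ IsIntR (∑ a, X a h)), 1 := by simp [mul_comm]
    _ ≤ _ := add_le_add (Finset.sum_le_sum h1) (Finset.sum_le_sum h2)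

/-- Existence of a perturbation direction. -/
lemma exists_dir {α β : Hh → ℤ} {X : A → Hh → ℝ} (hX : Feas α β X)
    (hF : (fracEnt X).Nonempty) :
    ∃ d : A × Hh → ℝ, d ≠ 0 ∧ (∀ p, d p ≠ 0 → p ∈ fracEnt X) ∧
      (∀ a, ∑ h : Hh, d (a, h) = 0) ∧
      (∀ h, IsIntR (∑ a, X a h) → ∑ a : A, d (a, h) = 0) := by
  classical
  have hrc := row_count hX
  have hcc := col_count hX
  set F := fracEnt X with hFdef
  set R := F.image Prod.fst with hR
  set Hc := F.image Prod.snd with hHcdef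
  set Hint := Hc.filter (fun h => IsIntR (∑ a, X a h)) with hHint
  set Hfr := Hc.filter (fun h => ¬ IsIntR (∑ a, X a h)) with hHfr
  by_cases hfr : Hfr = ∅
  · -- all touched columns have integral sums
    obtain ⟨p0, hp0⟩ := hF
    have ha0R : p0.1 ∈ R := mem_image_of_mem _ hp0
    have hR1 : 1 ≤ R.card := Finset.card_pos.mpr ⟨_, ha0R⟩
    have hHcint : Hint = Hc := by
      rw [hHint]
      refine Finset.filter_eq_self.mpr fun h hh => ?_
      by_contra hni
      exact (Finset.eq_empty_iff_forall_notMem.mp hfr h) (mem_filter.mpr ⟨hh, hni⟩)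
    have hcard : (R.erase p0.1).card + Hc.card < F.card := by
      rw [Finset.card_erase_of_mem ha0R]
      rw [hHcint] at hcc
      omega
    obtain ⟨d, hd0, hsupp, hrows, hcols⟩ := exists_kernel_vec F (R.erase p0.1) Hc hcard
    have hzero_row : ∀ a, a ∉ R → ∑ h : Hh, d (a, h) = 0 := by
      intro a ha
      refine Finset.sum_eq_zero fun h _ => ?_
      by_contra hne
      exact ha (mem_image_of_mem _ (hsupp _ hne))
    have hzero_col : ∀ h, h ∉ Hc → ∑ a : A, d (a, h) = 0 := by
      intro h hh
      refine Finset.sum_eq_zero fun a _ => ?_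
      by_contra hne
      exact hh (mem_image_of_mem _ (hsupp _ hne))
    have hcolall : ∀ h, ∑ a : A, d (a, h) = 0 := by
      intro h
      by_cases hh : h ∈ Hc
      · exact hcols h hh
      · exact hzero_col h hh
    have hrow_ne : ∀ a, a ≠ p0.1 → ∑ h : Hh, d (a, h) = 0 := by
      intro a ha
      by_cases haR : a ∈ R
      · exact hrows a (Finset.mem_erase.mpr ⟨ha, haR⟩)
      · exact hzero_row a haR
    have htot : ∑ a : A, ∑ h : Hh, d (a, h) = 0 := by
      rw [Finset.sum_comm]
      exact Finset.sum_eq_zero fun h _ => hcolall h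
    have hlast : ∑ h : Hh, d (p0.1, h) = 0 := by
      have := Finset.sum_eq_single (s := univ) (f := fun a => ∑ h : Hh, d (a, h)) p0.1
        (fun a _ ha => hrow_ne a ha) (by simp)
      rw [this] at htot
      exact htot
    refine ⟨d, hd0, hsupp, ?_, fun h _ => hcolall h⟩
    intro a
    by_cases ha : a = p0.1
    · rw [ha]; exact hlast
    · exact hrow_ne a ha
  · have h1 : 1 ≤ Hfr.card := Finset.card_pos.mpr (Finset.nonempty_of_ne_empty hfr)
    have hcard : R.card + Hint.card < F.card := by omega
    obtain ⟨d, hd0, hsupp, hrows, hcols⟩ := exists_kernel_vec F R Hint hcard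
    refine ⟨d, hd0, hsupp, ?_, ?_⟩
    · intro a
      by_cases haR : a ∈ R
      · exact hrows a haR
      · refine Finset.sum_eq_zero fun h _ => ?_
        by_contra hne
        exact haR (mem_image_of_mem _ (hsupp _ hne))
    · intro h hint
      by_cases hh : h ∈ Hc
      · exact hcols h (mem_filter.mpr ⟨hh, hint⟩)
      · refine Finset.sum_eq_zero fun a _ => ?_
        by_contra hne
        exact hh (mem_image_of_mem _ (hsupp _ hne))


lemma perturb_step {α β : Hh → ℤ} {X : A → Hh → ℝ} (hX : Feas α β X) {d : A × Hh → ℝ}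
    (hd0 : d ≠ 0) (hsupp : ∀ p, d p ≠ 0 → p ∈ fracEnt X)
    (hdrow : ∀ a, ∑ h : Hh, d (a, h) = 0)
    (hdcol : ∀ h, IsIntR (∑ a, X a h) → ∑ a : A, d (a, h) = 0) :
    ∃ ε : ℝ, 0 < ε ∧ Feas α β (fun a h => X a h + ε * d (a, h)) ∧
      msr (fun a h => X a h + ε * d (a, h)) < msr X := by
  classical
  set colD : Hh → ℝ := fun h => ∑ a : A, d (a, h) with hcolD
  set colX : Hh → ℝ := fun h => ∑ a : A, X a h with hcolX
  set slackE : A × Hh → ℝ :=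
    fun p => if 0 < d p then (1 - X p.1 p.2) / d p else X p.1 p.2 / (-(d p)) with hslackE
  set slackC : Hh → ℝ :=
    fun h => if 0 < colD h then ((β h : ℝ) - colX h) / colD h
      else (colX h - (α h : ℝ)) / (-(colD h)) with hslackC
  set E1 : Finset (A × Hh) := univ.filter (fun p => d p ≠ 0) with hE1
  set E2 : Finset Hh := univ.filter (fun h => colD h ≠ 0) with hE2
  set Ev : Finset ((A × Hh) ⊕ Hh) := E1.disjSum E2 with hEv
  set g : (A × Hh) ⊕ Hh → ℝ := Sum.elim slackE slackC with hg
  obtain ⟨p1, hp1⟩ : ∃ p, d p ≠ 0 := Function.ne_iff.mp hd0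
  have hne : Ev.Nonempty :=
    ⟨Sum.inl p1, Finset.inl_mem_disjSum.mpr (mem_filter.mpr ⟨mem_univ _, hp1⟩)⟩
  -- basic facts about fractional entries / columns
  have hentry : ∀ p : A × Hh, d p ≠ 0 → 0 < X p.1 p.2 ∧ X p.1 p.2 < 1 := by
    intro p hp
    have hfr : Frac (X p.1 p.2) := mem_fracEnt.mp (hsupp p hp)
    unfold Frac at hfr
    push_neg at hfr
    exact ⟨lt_of_le_of_ne (hX.1 p.1 p.2) (Ne.symm hfr.1),
      lt_of_le_of_ne (entry_le_one hX p.1 p.2) hfr.2⟩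
  have hcolfr : ∀ h, colD h ≠ 0 → (α h : ℝ) < colX h ∧ colX h < (β h : ℝ) := by
    intro h hc
    have hni : ¬ IsIntR (colX h) := fun hi => hc (hdcol h hi)
    constructor
    · refine lt_of_le_of_ne (hX.2.2 h).1 fun he => hni ?_
      exact ⟨α h, he.symm⟩
    · refine lt_of_le_of_ne (hX.2.2 h).2 fun he => hni ⟨β h, he⟩
  have hgpos : ∀ e ∈ Ev, 0 < g e := by
    intro e he
    rcases Finset.mem_disjSum.mp he with ⟨p, hp, rfl⟩ | ⟨h, hh, rfl⟩
    · have hp' : d p ≠ 0 := (mem_filter.mp hp).2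
      obtain ⟨h0, h1⟩ := hentry p hp'
      simp only [hg, Sum.elim_inl, hslackE]
      rcases lt_or_gt_of_ne hp' with hneg | hpos
      · rw [if_neg (by linarith)]
        exact div_pos h0 (by linarith)
      · rw [if_pos hpos]
        exact div_pos (by linarith) hpos
    · have hh' : colD h ≠ 0 := (mem_filter.mp hh).2
      obtain ⟨h0, h1⟩ := hcolfr h hh'
      simp only [hg, Sum.elim_inr, hslackC]
      rcases lt_or_gt_of_ne hh' with hneg | hpos
      · rw [if_neg (by linarith)]
        exact div_pos (by linarith) (by linarith)
      · rw [if_pos hpos]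
        exact div_pos (by linarith) hpos
  set ε : ℝ := Ev.inf' hne g with hεdef
  have hεpos : 0 < ε := (Finset.lt_inf'_iff hne).mpr hgpos
  have hεle : ∀ e ∈ Ev, ε ≤ g e := fun e he => Finset.inf'_le g he
  -- entry bounds
  have hent' : ∀ p : A × Hh, 0 ≤ X p.1 p.2 + ε * d p ∧ X p.1 p.2 + ε * d p ≤ 1 := by
    intro p
    by_cases hp : d p = 0
    · rw [hp, mul_zero, add_zero]
      exact ⟨hX.1 p.1 p.2, entry_le_one hX p.1 p.2⟩
    · have hmem : Sum.inl p ∈ Ev := Finset.inl_mem_disjSum.mpr (mem_filter.mpr ⟨mem_univ _, hp⟩)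
      have hle := hεle _ hmem
      obtain ⟨h0, h1⟩ := hentry p hp
      simp only [hg, Sum.elim_inl, hslackE] at hle
      rcases lt_or_gt_of_ne hp with hneg | hpos
      · rw [if_neg (by linarith)] at hle
        have : ε * (-(d p)) ≤ X p.1 p.2 := (le_div_iff₀ (by linarith)).mp hle
        constructor
        · nlinarith
        · nlinarith [mul_pos hεpos (neg_pos.mpr hneg)]
      · rw [if_pos hpos] at hle
        have : ε * d p ≤ 1 - X p.1 p.2 := (le_div_iff₀ hpos).mp hle
        constructor
        · nlinarith [mul_pos hεpos hpos]
        · linarith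
  have hcolsum : ∀ h, ∑ a : A, (X a h + ε * d (a, h)) = colX h + ε * colD h := by
    intro h
    rw [Finset.sum_add_distrib, ← Finset.mul_sum]
  have hcol' : ∀ h, (α h : ℝ) ≤ colX h + ε * colD h ∧ colX h + ε * colD h ≤ (β h : ℝ) := by
    intro h
    by_cases hc : colD h = 0
    · rw [hc, mul_zero, add_zero]
      exact hX.2.2 h
    · have hmem : Sum.inr h ∈ Ev := Finset.inr_mem_disjSum.mpr (mem_filter.mpr ⟨mem_univ _, hc⟩)
      have hle := hεle _ hmem
      obtain ⟨h0, h1⟩ := hcolfr h hc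
      simp only [hg, Sum.elim_inr, hslackC] at hle
      rcases lt_or_gt_of_ne hc with hneg | hpos
      · rw [if_neg (by linarith)] at hle
        have : ε * (-(colD h)) ≤ colX h - (α h : ℝ) := (le_div_iff₀ (by linarith)).mp hle
        constructor
        · nlinarith
        · nlinarith [mul_pos hεpos (neg_pos.mpr hneg)]
      · rw [if_pos hpos] at hle
        have : ε * colD h ≤ (β h : ℝ) - colX h := (le_div_iff₀ hpos).mp hle
        constructor
        · nlinarith [mul_pos hεpos hpos]
        · linarith
  have hfeas' : Feas α β (fun a h => X a h + ε * d (a, h)) := by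
    refine ⟨fun a h => (hent' (a, h)).1, ?_, ?_⟩
    · intro a
      rw [Finset.sum_add_distrib, ← Finset.mul_sum, hX.2.1 a, hdrow a, mul_zero, add_zero]
    · intro h
      rw [hcolsum h]
      exact hcol' h
  refine ⟨ε, hεpos, hfeas', ?_⟩
  -- measure decrease
  have hsub1 : fracEnt (fun a h => X a h + ε * d (a, h)) ⊆ fracEnt X := by
    intro p hp
    rw [mem_fracEnt] at hp ⊢
    by_cases hdp : d (p.1, p.2) = 0
    · simpa [hdp] using hp
    · exact mem_fracEnt.mp (hsupp _ hdp)
  have hsub2 : fracCol (fun a h => X a h + ε * d (a, h)) ⊆ fracCol X := by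
    intro h hh
    rw [mem_fracCol] at hh ⊢
    rw [hcolsum h] at hh
    by_cases hc : colD h = 0
    · rw [hc, mul_zero, add_zero] at hh
      exact hh
    · exact fun hi => hc (hdcol h hi)
  obtain ⟨e, heEv, hge⟩ := Finset.exists_mem_eq_inf' hne g
  rcases Finset.mem_disjSum.mp heEv with ⟨p, hp, rfl⟩ | ⟨h, hh, rfl⟩
  · -- an entry hits 0 or 1
    have hp' : d p ≠ 0 := (mem_filter.mp hp).2
    obtain ⟨h0, h1⟩ := hentry p hp'
    have hval : ε = slackE p := by rw [hεdef, hge]; rfl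
    have hnotmem : p ∉ fracEnt (fun a h => X a h + ε * d (a, h)) := by
      rw [mem_fracEnt]
      intro hfr
      apply hfr
      rcases lt_or_gt_of_ne hp' with hneg | hpos
      · left
        rw [hval, hslackE]
        simp only
        rw [if_neg (by linarith)]
        field_simp [hp']
        ring
      · right
        rw [hval, hslackE]
        simp only
        rw [if_pos hpos]
        field_simp [ne_of_gt hpos]
        ring
    have hss : fracEnt (fun a h => X a h + ε * d (a, h)) ⊂ fracEnt X :=
      ⟨hsub1, fun hsub => hnotmem (hsub (hsupp p hp'))⟩
    have := Finset.card_lt_card hss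
    have := Finset.card_le_card hsub2
    unfold msr
    omega
  · -- a column sum hits its bound
    have hh' : colD h ≠ 0 := (mem_filter.mp hh).2
    have hval : ε = slackC h := by rw [hεdef, hge]; rfl
    have hmemX : h ∈ fracCol X := mem_fracCol.mpr (fun hi => hh' (hdcol h hi))
    have hnotmem : h ∉ fracCol (fun a h => X a h + ε * d (a, h)) := by
      rw [mem_fracCol]
      intro hfr
      apply hfr
      rw [hcolsum h]
      rcases lt_or_gt_of_ne hh' with hneg | hpos
      · refine ⟨α h, ?_⟩
        rw [hval, hslackC]
        simp only
        rw [if_neg (by linarith)]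
        field_simp [hh']
        ring
      · refine ⟨β h, ?_⟩
        rw [hval, hslackC]
        simp only
        rw [if_pos hpos]
        field_simp [ne_of_gt hpos]
        ring
    have hss : fracCol (fun a h => X a h + ε * d (a, h)) ⊂ fracCol X :=
      ⟨hsub2, fun hsub => hnotmem (hsub hmemX)⟩
    have := Finset.card_lt_card hss
    have := Finset.card_le_card hsub1
    unfold msr
    omega


lemma integral_of_no_frac {α β : Hh → ℤ} {X : A → Hh → ℝ} (hX : Feas α β X)
    (hF : ¬ (fracEnt X).Nonempty) :
    X ∈ convexHull ℝ {Y : A → Hh → ℝ | Integral Y ∧ Feas α β Y} := by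
  refine subset_convexHull ℝ _ ?_
  refine ⟨fun a h => ?_, hX⟩
  by_contra hc
  push_neg at hc
  exact hF ⟨(a, h), mem_fracEnt.mpr fun hor => by tauto⟩

/-- Every feasible point of the interval transportation polytope is a convex combination
of integral feasible points. -/
theorem feas_mem_hull {α β : Hh → ℤ} (X : A → Hh → ℝ) (hX : Feas α β X) :
    X ∈ convexHull ℝ {Y : A → Hh → ℝ | Integral Y ∧ Feas α β Y} := by
  classical
  suffices H : ∀ (n : ℕ) (X : A → Hh → ℝ), msr X ≤ n → Feas α β X →
      X ∈ convexHull ℝ {Y : A → Hh → ℝ | Integral Y ∧ Feas α β Y} by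
    exact H (msr X) X le_rfl hX
  intro n
  induction n with
  | zero =>
    intro X hm hX
    refine integral_of_no_frac hX ?_
    rw [← Finset.card_pos]
    unfold msr at hm
    omega
  | succ n ih =>
    intro X hm hX
    by_cases hF : (fracEnt X).Nonempty
    · obtain ⟨d, hd0, hsupp, hdrow, hdcol⟩ := exists_dir hX hF
      obtain ⟨ε1, hε1, hfeas1, hm1⟩ := perturb_step hX hd0 hsupp hdrow hdcol
      have hd0' : (-d) ≠ 0 := neg_ne_zero.mpr hd0
      have hsupp' : ∀ p, (-d) p ≠ 0 → p ∈ fracEnt X := by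
        intro p hp
        exact hsupp p (fun hz => hp (by simp [hz]))
      have hdrow' : ∀ a, ∑ h : Hh, (-d) (a, h) = 0 := by
        intro a; simp [Finset.sum_neg_distrib, hdrow a]
      have hdcol' : ∀ h, IsIntR (∑ a, X a h) → ∑ a : A, (-d) (a, h) = 0 := by
        intro h hi; simp [Finset.sum_neg_distrib, hdcol h hi]
      obtain ⟨ε2, hε2, hfeas2, hm2⟩ := perturb_step hX hd0' hsupp' hdrow' hdcol'
      have h1 := ih _ (by omega) hfeas1
      have h2 := ih _ (by omega) hfeas2
      have hsum : 0 < ε1 + ε2 := by linarith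
      have hcomb : X = (ε2 / (ε1 + ε2)) • (fun a h => X a h + ε1 * d (a, h))
          + (ε1 / (ε1 + ε2)) • (fun a h => X a h + ε2 * (-d) (a, h)) := by
        funext a h
        simp only [Pi.add_apply, Pi.smul_apply, smul_eq_mul, Pi.neg_apply]
        field_simp
        ring
      rw [hcomb]
      exact (convex_convexHull ℝ _) h1 h2 (by positivity) (by positivity)
        (by field_simp; ring)
    · exact integral_of_no_frac hX hF


lemma max_two_mul (a : ℝ) : max (2 * a) 0 = 2 * max a 0 := by
  rcases le_total a 0 with h | h
  · rw [max_eq_right (by linarith), max_eq_right h, mul_zero]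
  · rw [max_eq_left (by linarith), max_eq_left h]

lemma max_floor_ceil (μ x : ℝ) (hx : IsIntR x) (h1 : (⌊μ⌋ : ℝ) ≤ x) (h2 : x ≤ (⌈μ⌉ : ℝ)) :
    max (x - μ) 0 = ((⌈μ⌉ : ℝ) - μ) * (x - (⌊μ⌋ : ℝ)) := by
  obtain ⟨z, rfl⟩ := hx
  have hz1 : ⌊μ⌋ ≤ z := by exact_mod_cast h1
  have hz2 : z ≤ ⌈μ⌉ := by exact_mod_cast h2
  have hcf : ⌈μ⌉ ≤ ⌊μ⌋ + 1 := Int.ceil_le_floor_add_one μ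
  have hfl : (⌊μ⌋ : ℝ) ≤ μ := Int.floor_le μ
  have hcl : μ ≤ (⌈μ⌉ : ℝ) := Int.le_ceil μ
  rcases eq_or_lt_of_le hz1 with he | hlt
  · rw [← he]
    rw [max_eq_right (by exact_mod_cast sub_nonpos.mpr (by exact_mod_cast hfl.trans_eq' rfl))]
    · simp
  · have hz : z = ⌈μ⌉ := le_antisymm hz2 (by omega)
    have hcfl : ⌈μ⌉ = ⌊μ⌋ + 1 := by omega
    subst hz
    rw [max_eq_left (by linarith)]
    have : ((⌈μ⌉ : ℝ) - (⌊μ⌋ : ℝ)) = 1 := by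
      rw [hcfl]; push_cast; ring
    nlinarith [this]

lemma prod_frac_le_quarter (μ : ℝ) :
    ((⌈μ⌉ : ℝ) - μ) * (μ - (⌊μ⌋ : ℝ)) ≤ 1 / 4 := by
  have h1 : (⌊μ⌋ : ℝ) ≤ μ := Int.floor_le μ
  have h2 : μ ≤ (⌈μ⌉ : ℝ) := Int.le_ceil μ
  have h3 : (⌈μ⌉ : ℝ) ≤ (⌊μ⌋ : ℝ) + 1 := by
    exact_mod_cast Int.ceil_le_floor_add_one μ
  nlinarith [sq_nonneg (((⌈μ⌉ : ℝ) - μ) - (μ - (⌊μ⌋ : ℝ)))]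

lemma IsIntR.floor_cast {x : ℝ} (hx : IsIntR x) : ((⌊x⌋ : ℤ) : ℝ) = x := by
  obtain ⟨z, rfl⟩ := hx
  rw [Int.floor_intCast]

end
end CouplesAux

/-- upper bound in terms of minimal singles' demand: every assignment
problem with couples whose hospital capacities are positive integers and whose singles'
demand `D_h = ∑_{s ∈ S} M_{s,h}` is at least `2` at every hospital admits a convex
combination of deterministic assignment matrices with approximation error at most
`1 / min_h D_h`. -/
theorem upper_bound_singles_demand {I H : Type*} [Fintype I] [Fintype H] [Nonempty H]
    (S : Finset I) (C : Finset (I × I)) (M : I → H → ℝ)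
    (hP : IsCouplesProblem S C M)
    (hq : ∀ h : H, ∃ m : ℕ, 0 < m ∧ ∑ i : I, M i h = m)
    (hD : ∀ h : H, 2 ≤ ∑ s ∈ S, M s h) :
    ∃ (K : ℕ) (lam : Fin K → ℝ) (Ms : Fin K → I → H → ℝ),
      (∀ k, 0 ≤ lam k) ∧ (∑ k, lam k = 1) ∧
      (∀ k, IsDeterministicAssignment C M (Ms k)) ∧
      ∀ i : I, ∑ h : H, |M i h - ∑ k, lam k * Ms k i h| ≤
        1 / (Finset.univ.inf' Finset.univ_nonempty fun h : H => ∑ s ∈ S, M s h) := by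
  classical
  open CouplesAux in
  obtain ⟨hcov, hmem, hdisj, hrange, hrowM, hcpl⟩ := hP
  set minD : ℝ := Finset.univ.inf' Finset.univ_nonempty (fun h : H => ∑ s ∈ S, M s h)
    with hminDdef
  set D : H → ℝ := fun h => ∑ s ∈ S, M s h with hDdef
  have hminD_le : ∀ h, minD ≤ D h := fun h => Finset.inf'_le _ (mem_univ h)
  have hminD2 : (2 : ℝ) ≤ minD := Finset.le_inf' _ _ (fun h _ => hD h)
  have hminDpos : (0 : ℝ) < minD := by linarith
  have hDpos : ∀ h, 0 < D h := fun h => lt_of_lt_of_le (by norm_num) ((hD h).trans_eq rfl)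
  have hD2 : ∀ h, 2 ≤ D h := fun h => hD h
  -- couple selector
  have hcov2 : ∀ i : I, ∃ c : I × I, i ∉ S → c ∈ C ∧ (i = c.1 ∨ i = c.2) := by
    intro i
    by_cases hi : i ∈ S
    · exact ⟨(i, i), fun h => absurd hi h⟩
    · rcases hcov i with h | ⟨c, hc, hor⟩
      · exact absurd h hi
      · exact ⟨c, fun _ => ⟨hc, hor⟩⟩
  choose co hco using hcov2
  have co_eq : ∀ c ∈ C, ∀ i, (i = c.1 ∨ i = c.2) → co i = c := by
    intro c hc i hor
    have hiS : i ∉ S := by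
      rcases hor with rfl | rfl
      exacts [(hmem c hc).1, (hmem c hc).2.1]
    obtain ⟨hc', hor'⟩ := hco i hiS
    by_contra hne
    obtain ⟨h1, h2, h3, h4⟩ := hdisj (co i) hc' c hc hne
    rcases hor' with he' | he' <;> rcases hor with he | he
    · exact h1 (he'.symm.trans he)
    · exact h2 (he'.symm.trans he)
    · exact h3 (he'.symm.trans he)
    · exact h4 (he'.symm.trans he)
  have hSc : Sᶜ = C.biUnion (fun c => {c.1, c.2}) := by
    ext i
    simp only [Finset.mem_compl, Finset.mem_biUnion, Finset.mem_insert, Finset.mem_singleton]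
    constructor
    · intro hi
      obtain ⟨hc, hor⟩ := hco i hi
      exact ⟨co i, hc, hor⟩
    · rintro ⟨c, hc, hor⟩
      rcases hor with rfl | rfl
      exacts [(hmem c hc).1, (hmem c hc).2.1]
  have hpair : ∀ f : I × I → ℝ, ∑ i ∈ Sᶜ, f (co i) = 2 * ∑ c ∈ C, f c := by
    intro f
    rw [hSc, Finset.sum_biUnion]
    · rw [Finset.mul_sum]
      refine Finset.sum_congr rfl fun c hc => ?_
      have h12 : c.1 ≠ c.2 := (hmem c hc).2.2
      rw [Finset.sum_pair h12, co_eq c hc c.1 (Or.inl rfl), co_eq c hc c.2 (Or.inr rfl)]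
      ring
    · intro c hc c' hc' hne
      obtain ⟨h1, h2, h3, h4⟩ := hdisj c (by exact_mod_cast hc) c' (by exact_mod_cast hc') hne
      refine Finset.disjoint_left.mpr ?_
      intro i hi hi'
      simp only [Finset.mem_insert, Finset.mem_singleton] at hi hi'
      rcases hi with rfl | rfl <;> rcases hi' with he | he
      · exact h1 he
      · exact h2 he
      · exact h3 he
      · exact h4 he
  set μ : H → ℝ := fun h => ∑ c ∈ C, M c.1 h with hμdef
  have hq_split : ∀ h : H, ∑ i : I, M i h = D h + 2 * μ h := by
    intro h
    rw [← Finset.sum_add_sum_compl S (fun i => M i h)]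
    congr 1
    have hcg : ∀ i ∈ Sᶜ, M i h = (fun c : I × I => M c.1 h) (co i) := by
      intro i hi
      have hiS : i ∉ S := Finset.mem_compl.mp hi
      obtain ⟨hcC, hor⟩ := hco i hiS
      rcases hor with he | he
      · conv_lhs => rw [he]
      · conv_lhs => rw [he]
        exact (hcpl (co i) hcC h).symm
    rw [Finset.sum_congr rfl hcg, hpair (fun c => M c.1 h)]
  -- decompose the couples' matrix
  have hXCfeas : CouplesAux.Feas (fun h => ⌊μ h⌋) (fun h => ⌈μ h⌉)
      (fun (c : ↥C) (h : H) => M (c : I × I).1 h) := by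
    refine ⟨fun c h => (hrange _ h).1, fun c => hrowM _, fun h => ?_⟩
    have hcs : ∑ c : ↥C, M (c : I × I).1 h = μ h := Finset.sum_coe_sort C (fun c => M c.1 h)
    rw [hcs]
    exact ⟨Int.floor_le _, Int.le_ceil _⟩
  have hXC := CouplesAux.feas_mem_hull _ hXCfeas
  rw [_root_.convexHull_eq] at hXC
  obtain ⟨ι, t, p, Y, hp0, hp1, hYmem, hYcm⟩ := hXC
  rw [Finset.centerMass_eq_of_sum_1 _ _ hp1] at hYcm
  -- notation for realized couple counts and corrections
  set n : ι → H → ℝ := fun ω h => ∑ c : ↥C, Y ω c h with hndef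
  set dm : ι → H → ℝ := fun ω h => max (2 * (n ω h - μ h)) 0 with hdmdef
  set dp : ι → H → ℝ := fun ω h => max (2 * (μ h - n ω h)) 0 with hdpdef
  set Tt : ι → ℝ := fun ω => ∑ h, dp ω h with hTdef
  set mm : ι → I → ℝ := fun ω s => ∑ h, M s h * dm ω h / D h with hmmdef
  set NS : ι → I → H → ℝ := fun ω s h =>
    M s h * (1 - dm ω h / D h) + (if Tt ω = 0 then 0 else mm ω s * dp ω h / Tt ω) with hNSdef
  have hdm0 : ∀ ω h, 0 ≤ dm ω h := fun ω h => le_max_right _ _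
  have hdp0 : ∀ ω h, 0 ≤ dp ω h := fun ω h => le_max_right _ _
  have hT0 : ∀ ω, 0 ≤ Tt ω := fun ω => Finset.sum_nonneg fun h _ => hdp0 ω h
  have hYint : ∀ ω ∈ t, CouplesAux.Integral (Y ω) := fun ω hω => (hYmem ω hω).1
  have hYfeas : ∀ ω ∈ t, CouplesAux.Feas (fun h => ⌊μ h⌋) (fun h => ⌈μ h⌉) (Y ω) :=
    fun ω hω => (hYmem ω hω).2
  have hnint : ∀ ω ∈ t, ∀ h, CouplesAux.IsIntR (n ω h) := by
    intro ω hω h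
    exact CouplesAux.isIntR_sum _ _ fun c _ =>
      CouplesAux.isIntR_of_not_frac (fun hf => hf (hYint ω hω c h))
  have hnlow : ∀ ω ∈ t, ∀ h, ((⌊μ h⌋ : ℤ) : ℝ) ≤ n ω h := fun ω hω h => ((hYfeas ω hω).2.2 h).1
  have hnhigh : ∀ ω ∈ t, ∀ h, n ω h ≤ ((⌈μ h⌉ : ℤ) : ℝ) := fun ω hω h => ((hYfeas ω hω).2.2 h).2
  have hdm_le2 : ∀ ω ∈ t, ∀ h, dm ω h ≤ 2 := by
    intro ω hω h
    refine max_le ?_ (by norm_num)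
    have h1 := hnhigh ω hω h
    have h2 : ((⌈μ h⌉ : ℤ) : ℝ) ≤ μ h + 1 := by
      have := Int.ceil_lt_add_one (μ h)
      linarith
    linarith
  have hdpm : ∀ ω h, dp ω h - dm ω h = 2 * (μ h - n ω h) := by
    intro ω h
    rcases le_total (n ω h) (μ h) with hle | hle
    · rw [hdpdef, hdmdef]
      simp only
      rw [max_eq_left (by linarith), max_eq_right (by linarith)]
      ring
    · rw [hdpdef, hdmdef]
      simp only
      rw [max_eq_right (by linarith), max_eq_left (by linarith)]
      ring
  -- row sums of μ and n
  have hμtot : ∑ h, μ h = (C.card : ℝ) := by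
    rw [hμdef]
    rw [Finset.sum_comm]
    simp [hrowM]
  have hntot : ∀ ω ∈ t, ∑ h, n ω h = (C.card : ℝ) := by
    intro ω hω
    rw [hndef]
    simp only
    rw [Finset.sum_comm]
    have : ∀ c : ↥C, ∑ h, Y ω c h = 1 := fun c => (hYfeas ω hω).2.1 c
    rw [Finset.sum_congr rfl fun c _ => this c]
    simp [Finset.card_univ]
  have hdm_sum : ∀ ω ∈ t, ∑ h, dm ω h = Tt ω := by
    intro ω hω
    have : ∑ h, (dp ω h - dm ω h) = 0 := by
      rw [Finset.sum_congr rfl fun h _ => hdpm ω h]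
      rw [← Finset.mul_sum, Finset.sum_sub_distrib, hμtot, hntot ω hω]
      ring
    rw [Finset.sum_sub_distrib] at this
    rw [hTdef]
    linarith
  -- integrality of the realized singles' demand
  have hD'eq : ∀ ω ∈ t, ∀ h, D h + (dp ω h - dm ω h) = (∑ i : I, M i h) - 2 * n ω h := by
    intro ω hω h
    rw [hdpm ω h, hq_split h]
    ring
  have hD'int : ∀ ω ∈ t, ∀ h, CouplesAux.IsIntR (D h + (dp ω h - dm ω h)) := by
    intro ω hω h
    rw [hD'eq ω hω h]
    obtain ⟨mh, _, hmh⟩ := hq h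
    refine CouplesAux.IsIntR.sub ⟨(mh : ℤ), by exact_mod_cast hmh⟩ ?_
    obtain ⟨z, hz⟩ := hnint ω hω h
    exact ⟨2 * z, by rw [hz]; push_cast; ring⟩
  set zc : ι → H → ℤ := fun ω h => ⌊D h + (dp ω h - dm ω h)⌋ with hzcdef
  have hzc : ∀ ω ∈ t, ∀ h, ((zc ω h : ℤ) : ℝ) = D h + (dp ω h - dm ω h) :=
    fun ω hω h => (hD'int ω hω h).floor_cast
  -- feasibility of the per-realization singles' matrix
  have hdmD : ∀ ω ∈ t, ∀ h, dm ω h / D h ≤ 1 := by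
    intro ω hω h
    rw [div_le_one (hDpos h)]
    exact (hdm_le2 ω hω h).trans (hD2 h)
  have hmm0 : ∀ ω s, 0 ≤ mm ω s := by
    intro ω s
    refine Finset.sum_nonneg fun h _ => ?_
    have := (hrange s h).1
    have := hdm0 ω h
    have := (hDpos h).le
    positivity
  have hNS0 : ∀ ω ∈ t, ∀ s h, 0 ≤ NS ω s h := by
    intro ω hω s h
    refine add_nonneg (mul_nonneg (hrange s h).1 (by linarith [hdmD ω hω h])) ?_
    split_ifs with hT
    · exact le_refl 0
    · have hTpos : 0 < Tt ω := lt_of_le_of_ne (hT0 ω) (Ne.symm hT)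
      have := hmm0 ω s
      have := hdp0 ω h
      positivity
  have hT_zero : ∀ ω ∈ t, Tt ω = 0 → (∀ h, dp ω h = 0) ∧ (∀ h, dm ω h = 0) := by
    intro ω hω hT
    constructor
    · intro h
      exact (Finset.sum_eq_zero_iff_of_nonneg fun h' _ => hdp0 ω h').mp hT h (mem_univ h)
    · intro h
      have hs : ∑ h', dm ω h' = 0 := by rw [hdm_sum ω hω, hT]
      exact (Finset.sum_eq_zero_iff_of_nonneg fun h' _ => hdm0 ω h').mp hs h (mem_univ h)
  have hNSrow : ∀ ω ∈ t, ∀ s : I, ∑ h, NS ω s h = 1 := by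
    intro ω hω s
    by_cases hT : Tt ω = 0
    · obtain ⟨hdpz, hdmz⟩ := hT_zero ω hω hT
      have : ∀ h, NS ω s h = M s h := by
        intro h
        rw [hNSdef]
        simp only
        rw [if_pos hT, hdmz h]
        simp
      rw [Finset.sum_congr rfl fun h _ => this h]
      exact hrowM s
    · have hexp : ∀ h, NS ω s h = (M s h - M s h * dm ω h / D h) + (mm ω s / Tt ω) * dp ω h := by
        intro h
        rw [hNSdef]
        simp only
        rw [if_neg hT]
        ring
      rw [Finset.sum_congr rfl fun h _ => hexp h, Finset.sum_add_distrib,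
        Finset.sum_sub_distrib, ← Finset.mul_sum, hrowM s]
      have h1 : ∑ h, M s h * dm ω h / D h = mm ω s := rfl
      have h2 : ∑ h, dp ω h = Tt ω := rfl
      rw [h1, h2]
      field_simp
      ring
  have hScol : ∀ h, ∑ s : ↥S, M (s : I) h = D h := fun h => Finset.sum_coe_sort S (fun s => M s h)
  have hmm_tot : ∀ ω ∈ t, ∑ s : ↥S, mm ω (s : I) = Tt ω := by
    intro ω hω
    have hperh : ∀ h, ∑ s : ↥S, M (s : I) h * dm ω h / D h = dm ω h := by
      intro h
      have : ∀ s : ↥S, M (s : I) h * dm ω h / D h = M (s : I) h * (dm ω h / D h) := by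
        intro s; ring
      rw [Finset.sum_congr rfl fun s _ => this s, ← Finset.sum_mul, hScol h]
      rw [← mul_div_assoc]
      exact mul_div_cancel_left₀ _ (ne_of_gt (hDpos h))
    calc ∑ s : ↥S, mm ω (s : I) = ∑ s : ↥S, ∑ h, M (s : I) h * dm ω h / D h := rfl
      _ = ∑ h, ∑ s : ↥S, M (s : I) h * dm ω h / D h := Finset.sum_comm
      _ = ∑ h, dm ω h := Finset.sum_congr rfl fun h _ => hperh h
      _ = Tt ω := hdm_sum ω hω
  have hNScol : ∀ ω ∈ t, ∀ h, ∑ s : ↥S, NS ω (s : I) h = D h + (dp ω h - dm ω h) := by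
    intro ω hω h
    by_cases hT : Tt ω = 0
    · obtain ⟨hdpz, hdmz⟩ := hT_zero ω hω hT
      have : ∀ s : ↥S, NS ω (s : I) h = M (s : I) h := by
        intro s
        rw [hNSdef]
        simp only
        rw [if_pos hT, hdmz h]
        simp
      rw [Finset.sum_congr rfl fun s _ => this s, hScol h, hdpz h, hdmz h]
      ring
    · have hexp : ∀ s : ↥S, NS ω (s : I) h =
          M (s : I) h * (1 - dm ω h / D h) + mm ω (s : I) * (dp ω h / Tt ω) := by
        intro s
        rw [hNSdef]
        simp only
        rw [if_neg hT]
        ring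
      rw [Finset.sum_congr rfl fun s _ => hexp s, Finset.sum_add_distrib,
        ← Finset.sum_mul, ← Finset.sum_mul, hScol h, hmm_tot ω hω]
      have hD0 : D h ≠ 0 := ne_of_gt (hDpos h)
      field_simp
      ring
  have hNSfeas : ∀ ω ∈ t, CouplesAux.Feas (zc ω) (zc ω) (fun (s : ↥S) h => NS ω (s : I) h) := by
    intro ω hω
    refine ⟨fun s h => hNS0 ω hω s h, fun s => hNSrow ω hω s, fun h => ?_⟩
    rw [hNScol ω hω h, hzc ω hω h]
    exact ⟨le_refl _, le_refl _⟩
  have hNShull : ∀ ω ∈ t,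
      (fun (s : ↥S) h => NS ω (s : I) h) ∈ convexHull ℝ
        {Z : ↥S → H → ℝ | CouplesAux.Integral Z ∧ CouplesAux.Feas (zc ω) (zc ω) Z} :=
    fun ω hω => CouplesAux.feas_mem_hull _ (hNSfeas ω hω)
  -- extend couples' assignments to all interns
  set YE : ι → I × I → H → ℝ := fun ω x h => if hx : x ∈ C then Y ω ⟨x, hx⟩ h else 0 with hYEdef
  have hYEC : ∀ ω, ∀ x (hx : x ∈ C), ∀ h, YE ω x h = Y ω ⟨x, hx⟩ h := by
    intro ω x hx h
    rw [hYEdef]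
    simp only
    rw [dif_pos hx]
  set G : ι → (↥S → H → ℝ) → I → H → ℝ := fun ω Z i h =>
    if hi : i ∈ S then Z ⟨i, hi⟩ h else YE ω (co i) h with hGdef
  have hG_S : ∀ ω Z i (hi : i ∈ S) h, G ω Z i h = Z ⟨i, hi⟩ h := by
    intro ω Z i hi h
    rw [hGdef]
    simp only
    rw [dif_pos hi]
  have hG_nS : ∀ ω Z i (hi : i ∉ S) h, G ω Z i h = YE ω (co i) h := by
    intro ω Z i hi h
    rw [hGdef]
    simp only
    rw [dif_neg hi]
  -- G sends integral feasible singles' matrices to deterministic assignments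
  have hGdet : ∀ ω ∈ t, ∀ Z : ↥S → H → ℝ, CouplesAux.Integral Z →
      CouplesAux.Feas (zc ω) (zc ω) Z → IsDeterministicAssignment C M (G ω Z) := by
    intro ω hω Z hZint hZfeas
    have hY01 : ∀ x h, YE ω x h = 0 ∨ YE ω x h = 1 := by
      intro x h
      by_cases hx : x ∈ C
      · rw [hYEC ω x hx h]; exact hYint ω hω _ h
      · left; rw [hYEdef]; simp only; rw [dif_neg hx]
    refine ⟨?_, ?_, ?_, ?_⟩
    · intro i h
      by_cases hi : i ∈ S
      · rw [hG_S ω Z i hi h]; exact hZint _ h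
      · rw [hG_nS ω Z i hi h]; exact hY01 _ h
    · intro i
      by_cases hi : i ∈ S
      · rw [Finset.sum_congr rfl fun h _ => hG_S ω Z i hi h]
        exact hZfeas.2.1 _
      · rw [Finset.sum_congr rfl fun h _ => hG_nS ω Z i hi h]
        have hcC := (hco i hi).1
        rw [Finset.sum_congr rfl fun h _ => hYEC ω (co i) hcC h]
        exact (hYfeas ω hω).2.1 _
    · intro c hc h
      have h1 : c.1 ∉ S := (hmem c hc).1
      have h2 : c.2 ∉ S := (hmem c hc).2.1
      rw [hG_nS ω Z c.1 h1 h, hG_nS ω Z c.2 h2 h,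
        co_eq c hc c.1 (Or.inl rfl), co_eq c hc c.2 (Or.inr rfl)]
    · intro h
      rw [← Finset.sum_add_sum_compl S (fun i => G ω Z i h)]
      have hS1 : ∑ i ∈ S, G ω Z i h = ∑ s : ↥S, Z s h := by
        rw [← Finset.sum_coe_sort S (fun i => G ω Z i h)]
        refine Finset.sum_congr rfl fun s _ => ?_
        rw [hG_S ω Z (s : I) s.2 h]
      have hS2 : ∑ i ∈ Sᶜ, G ω Z i h = 2 * ∑ c ∈ C, YE ω c h := by
        have : ∀ i ∈ Sᶜ, G ω Z i h = (fun c : I × I => YE ω c h) (co i) := by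
          intro i hi
          exact hG_nS ω Z i (Finset.mem_compl.mp hi) h
        rw [Finset.sum_congr rfl this, hpair (fun c => YE ω c h)]
      have hYEn : ∑ c ∈ C, YE ω c h = n ω h := by
        rw [← Finset.sum_coe_sort C (fun c => YE ω c h)]
        exact Finset.sum_congr rfl fun c _ => hYEC ω (c : I × I) c.2 h
      have hZcol : ∑ s : ↥S, Z s h = D h + (dp ω h - dm ω h) := by
        have := (hZfeas.2.2 h).1
        have := (hZfeas.2.2 h).2
        have hz := hzc ω hω h
        linarith
      rw [hS1, hS2, hYEn, hZcol, hD'eq ω hω h]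
      ring
  -- fractional combined matrices lie in the hull of deterministic assignments
  set F : ι → I → H → ℝ := fun ω => G ω (fun (s : ↥S) h => NS ω (s : I) h) with hFdef
  have hFhull : ∀ ω ∈ t,
      F ω ∈ convexHull ℝ {W : I → H → ℝ | IsDeterministicAssignment C M W} := by
    intro ω hω
    have hmem' := hNShull ω hω
    rw [_root_.convexHull_eq] at hmem'
    obtain ⟨ι₂, t₂, w₂, Z₂, hw0, hw1, hZmem, hZcm⟩ := hmem'
    rw [Finset.centerMass_eq_of_sum_1 _ _ hw1] at hZcm
    have hFrep : F ω = ∑ k ∈ t₂, w₂ k • G ω (Z₂ k) := by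
      funext i h
      rw [Finset.sum_apply, Finset.sum_apply]
      simp only [Pi.smul_apply, smul_eq_mul, hFdef, hGdef]
      by_cases hi : i ∈ S
      · simp only [dif_pos hi]
        have := congrFun (congrFun hZcm ⟨i, hi⟩) h
        rw [Finset.sum_apply, Finset.sum_apply] at this
        simp only [Pi.smul_apply, smul_eq_mul] at this
        exact this.symm
      · simp only [dif_neg hi]
        rw [← Finset.sum_mul, hw1, one_mul]
    rw [hFrep]
    exact Convex.sum_mem (convex_convexHull ℝ _) hw0 hw1
      (fun k hk => subset_convexHull ℝ _ (hGdet ω hω (Z₂ k) (hZmem k hk).1 (hZmem k hk).2))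
  -- the averaged assignment
  set Zf : I → H → ℝ := fun i h => ∑ ω ∈ t, p ω * F ω i h with hZfdef
  have hZfhull : Zf ∈ convexHull ℝ {W : I → H → ℝ | IsDeterministicAssignment C M W} := by
    have hrep : Zf = ∑ ω ∈ t, p ω • F ω := by
      funext i h
      rw [Finset.sum_apply, Finset.sum_apply]
      simp only [hZfdef, Pi.smul_apply, smul_eq_mul]
    rw [hrep]
    exact Convex.sum_mem (convex_convexHull ℝ _) hp0 hp1 (fun ω hω => hFhull ω hω)
  -- expectation identities
  have hEY : ∀ (c : ↥C) (h : H), ∑ ω ∈ t, p ω * Y ω c h = M (c : I × I).1 h := by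
    intro c h
    have := congrFun (congrFun hYcm c) h
    rw [Finset.sum_apply, Finset.sum_apply] at this
    simpa [Pi.smul_apply, smul_eq_mul] using this
  have hEn : ∀ h, ∑ ω ∈ t, p ω * n ω h = μ h := by
    intro h
    calc ∑ ω ∈ t, p ω * n ω h = ∑ ω ∈ t, ∑ c : ↥C, p ω * Y ω c h := by
          refine Finset.sum_congr rfl fun ω _ => ?_
          rw [hndef]
          simp only
          rw [Finset.mul_sum]
      _ = ∑ c : ↥C, ∑ ω ∈ t, p ω * Y ω c h := Finset.sum_comm
      _ = ∑ c : ↥C, M (c : I × I).1 h := Finset.sum_congr rfl fun c _ => hEY c h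
      _ = μ h := Finset.sum_coe_sort C (fun c => M c.1 h)
  have hEdm : ∀ h, ∑ ω ∈ t, p ω * dm ω h ≤ 1 / 2 := by
    intro h
    have hid : ∀ ω ∈ t, dm ω h
        = 2 * ((((⌈μ h⌉ : ℤ) : ℝ) - μ h) * (n ω h - ((⌊μ h⌋ : ℤ) : ℝ))) := by
      intro ω hω
      rw [hdmdef]
      simp only
      rw [CouplesAux.max_two_mul,
        CouplesAux.max_floor_ceil (μ h) (n ω h) (hnint ω hω h) (hnlow ω hω h) (hnhigh ω hω h)]
    have hid2 : ∀ ω ∈ t, p ω * dm ω h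
        = (2 * ((((⌈μ h⌉ : ℤ) : ℝ) - μ h))) * (p ω * n ω h - p ω * ((⌊μ h⌋ : ℤ) : ℝ)) := by
      intro ω hω
      rw [hid ω hω]
      ring
    have key : ∑ ω ∈ t, p ω * dm ω h
        = (2 * ((((⌈μ h⌉ : ℤ) : ℝ) - μ h))) * (μ h - ((⌊μ h⌋ : ℤ) : ℝ)) := by
      rw [Finset.sum_congr rfl hid2, ← Finset.mul_sum, Finset.sum_sub_distrib,
        ← Finset.sum_mul, hEn h, hp1, one_mul]
    rw [key]
    have := CouplesAux.prod_frac_le_quarter (μ h)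
    linarith
  -- per-realization L1 bound for singles
  have hL1 : ∀ ω ∈ t, ∀ s : I, ∑ h, |M s h - NS ω s h| ≤ 2 * mm ω s := by
    intro ω hω s
    have hterm : ∀ h, |M s h - NS ω s h| ≤ M s h * dm ω h / D h
        + (if Tt ω = 0 then 0 else mm ω s * dp ω h / Tt ω) := by
      intro h
      have hval : M s h - NS ω s h = M s h * dm ω h / D h
          - (if Tt ω = 0 then 0 else mm ω s * dp ω h / Tt ω) := by
        rw [hNSdef]
        simp only
        ring
      have ha : 0 ≤ M s h * dm ω h / D h := by
        have h1 := (hrange s h).1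
        have h2 := hdm0 ω h
        have h3 := (hDpos h).le
        positivity
      have hb : 0 ≤ (if Tt ω = 0 then 0 else mm ω s * dp ω h / Tt ω) := by
        split_ifs with hT
        · exact le_refl 0
        · have hTpos : 0 < Tt ω := lt_of_le_of_ne (hT0 ω) (Ne.symm hT)
          have := hmm0 ω s
          have := hdp0 ω h
          positivity
      rw [hval]
      rw [abs_le]
      constructor <;> [linarith [abs_nonneg (M s h * dm ω h / D h)]; linarith]
    calc ∑ h, |M s h - NS ω s h|
        ≤ ∑ h, (M s h * dm ω h / D h + (if Tt ω = 0 then 0 else mm ω s * dp ω h / Tt ω)) :=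
          Finset.sum_le_sum fun h _ => hterm h
      _ = mm ω s + (if Tt ω = 0 then 0 else mm ω s) := by
          rw [Finset.sum_add_distrib]
          congr 1
          by_cases hT : Tt ω = 0
          · simp [hT]
          · simp only [if_neg hT]
            rw [Finset.sum_congr rfl
              (fun h _ => show mm ω s * dp ω h / Tt ω = (mm ω s / Tt ω) * dp ω h by ring),
              ← Finset.mul_sum]
            have h2 : ∑ h, dp ω h = Tt ω := rfl
            rw [h2, div_mul_cancel₀ _ hT]
      _ ≤ 2 * mm ω s := by
          have := hmm0 ω s
          split_ifs <;> linarith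
  -- extract the finite convex combination
  rw [_root_.convexHull_eq] at hZfhull
  obtain ⟨κ, tt, w, z, hw0, hw1, hzmem, hzcm⟩ := hZfhull
  rw [Finset.centerMass_eq_of_sum_1 _ _ hw1] at hzcm
  refine ⟨tt.card, fun k => w (tt.equivFin.symm k).1, fun k => z (tt.equivFin.symm k).1,
    fun k => hw0 _ (tt.equivFin.symm k).2, ?_, fun k => hzmem _ (tt.equivFin.symm k).2, ?_⟩
  · rw [Equiv.sum_comp tt.equivFin.symm (fun x : ↥tt => w x.1),
      Finset.sum_coe_sort tt w]
    exact hw1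
  · intro i
    have hval : ∀ h, ∑ k, w (tt.equivFin.symm k).1 * z (tt.equivFin.symm k).1 i h = Zf i h := by
      intro h
      rw [Equiv.sum_comp tt.equivFin.symm (fun x : ↥tt => w x.1 * z x.1 i h),
        Finset.sum_coe_sort tt (fun j => w j * z j i h)]
      have := congrFun (congrFun hzcm i) h
      rw [Finset.sum_apply, Finset.sum_apply] at this
      simpa [Pi.smul_apply, smul_eq_mul] using this
    have hgoal : ∀ h, |M i h - ∑ k, w (tt.equivFin.symm k).1 * z (tt.equivFin.symm k).1 i h|
        = |M i h - Zf i h| := fun h => by rw [hval h]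
    rw [Finset.sum_congr rfl fun h _ => hgoal h]
    by_cases hi : i ∈ S
    · -- singles
      have hFi : ∀ ω, ∀ h, F ω i h = NS ω i h := by
        intro ω h
        have hF_eval : F ω i h = G ω (fun (s : ↥S) h => NS ω (s : I) h) i h := rfl
        rw [hF_eval]
        exact hG_S ω (fun (s : ↥S) h => NS ω (s : I) h) i hi h
      have hstep1 : ∀ h, |M i h - Zf i h| ≤ ∑ ω ∈ t, p ω * |M i h - NS ω i h| := by
        intro h
        have hZv : Zf i h = ∑ ω ∈ t, p ω * NS ω i h := by
          rw [hZfdef]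
          simp only
          exact Finset.sum_congr rfl fun ω hω => by rw [hFi ω h]
        have hMv : M i h = ∑ ω ∈ t, p ω * M i h := by rw [← Finset.sum_mul, hp1, one_mul]
        calc |M i h - Zf i h| = |∑ ω ∈ t, (p ω * M i h - p ω * NS ω i h)| := by
              rw [Finset.sum_sub_distrib, ← hZv, ← hMv]
          _ ≤ ∑ ω ∈ t, |p ω * M i h - p ω * NS ω i h| := Finset.abs_sum_le_sum_abs _ _
          _ = ∑ ω ∈ t, p ω * |M i h - NS ω i h| := by
              refine Finset.sum_congr rfl fun ω hω => ?_
              rw [← mul_sub, abs_mul, abs_of_nonneg (hp0 ω hω)]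
      calc ∑ h, |M i h - Zf i h| ≤ ∑ h, ∑ ω ∈ t, p ω * |M i h - NS ω i h| :=
            Finset.sum_le_sum fun h _ => hstep1 h
        _ = ∑ ω ∈ t, ∑ h, p ω * |M i h - NS ω i h| := Finset.sum_comm
        _ = ∑ ω ∈ t, p ω * ∑ h, |M i h - NS ω i h| := by
            exact Finset.sum_congr rfl fun ω _ => by rw [Finset.mul_sum]
        _ ≤ ∑ ω ∈ t, p ω * (2 * mm ω i) :=
            Finset.sum_le_sum fun ω hω =>
              mul_le_mul_of_nonneg_left (hL1 ω hω i) (hp0 ω hω)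
        _ = ∑ h, 2 * ((M i h / D h) * ∑ ω ∈ t, p ω * dm ω h) := by
            calc ∑ ω ∈ t, p ω * (2 * mm ω i)
                = ∑ ω ∈ t, ∑ h, 2 * ((M i h / D h) * (p ω * dm ω h)) := by
                  refine Finset.sum_congr rfl fun ω _ => ?_
                  rw [hmmdef]
                  simp only
                  rw [Finset.mul_sum, Finset.mul_sum]
                  refine Finset.sum_congr rfl fun h _ => ?_
                  ring
              _ = ∑ h, ∑ ω ∈ t, 2 * ((M i h / D h) * (p ω * dm ω h)) := Finset.sum_comm
              _ = ∑ h, 2 * ((M i h / D h) * ∑ ω ∈ t, p ω * dm ω h) := by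
                  refine Finset.sum_congr rfl fun h _ => ?_
                  rw [Finset.mul_sum, Finset.mul_sum]
        _ ≤ ∑ h, 2 * ((M i h / D h) * (1 / 2)) := by
            refine Finset.sum_le_sum fun h _ => ?_
            have hnn : 0 ≤ M i h / D h := by
              have := (hrange i h).1
              have := (hDpos h).le
              positivity
            have := mul_le_mul_of_nonneg_left (hEdm h) hnn
            linarith
        _ = ∑ h, M i h / D h := Finset.sum_congr rfl fun h _ => by ring
        _ ≤ ∑ h, M i h / minD := by
            refine Finset.sum_le_sum fun h _ => ?_
            rw [div_eq_mul_inv, div_eq_mul_inv]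
            refine mul_le_mul_of_nonneg_left ?_ (hrange i h).1
            exact inv_anti₀ hminDpos (hminD_le h)
        _ = (∑ h, M i h) / minD := by rw [Finset.sum_div]
        _ = 1 / minD := by rw [hrowM i]
    · -- couple members: exact marginals
      have hcC := (hco i hi).1
      have hzero : ∀ h, Zf i h = M i h := by
        intro h
        have h1 : ∀ ω ∈ t, p ω * F ω i h = p ω * Y ω ⟨co i, hcC⟩ h := by
          intro ω hω
          have h2 : F ω i h = YE ω (co i) h := by
            have hF_eval : F ω i h = G ω (fun (s : ↥S) h => NS ω (s : I) h) i h := rfl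
            rw [hF_eval]
            exact hG_nS ω (fun (s : ↥S) h => NS ω (s : I) h) i hi h
          rw [h2, hYEC ω (co i) hcC h]
        rw [hZfdef]
        simp only
        rw [Finset.sum_congr rfl h1, hEY ⟨co i, hcC⟩ h]
        obtain ⟨hcC', hor⟩ := hco i hi
        rcases hor with he | he
        · rw [← he]
        · rw [hcpl (co i) hcC h, ← he]
      have : ∀ h, |M i h - Zf i h| = 0 := by
        intro h
        rw [hzero h, sub_self, abs_zero]
      rw [Finset.sum_congr rfl fun h _ => this h]
      rw [Finset.sum_const, smul_zero]
      positivity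
end
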